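/- arXiv:1907.03251 — 8 statements merged into one kernel-verified Lean document; each statement's English description precedes it below -/
import Mathlib

section
/- For every natural number n ≥ 1, the number of pairs (x, y) of n-bit integers satisfying x ⊕ y ≡ x − y (mod 2^n), where the congruence is taken in the integers, equals 4 · 3^(n−1); moreover, for n-bit integers x, y this congruence holds if and only if the pair of bits (x_i, y_i) is not (0, 1) for every position i with 0 ≤ i ≤ n − 2. -/
private lemma key_id : ∀ x y : ℕ, (x ^^^ y) + y = x + 2 * ((x ^^^ y) &&& y) := by
  intro x
  induction x using Nat.binaryRec with
  | zero => intro y; simp; omega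
  | bit a m ih =>
    intro y
    rw [← Nat.bit_bodd_div2 y, Nat.xor_bit, Nat.land_bit]
    have H := ih y.div2
    cases a <;> cases y.bodd <;> simp [Nat.bit_val] <;> omega

private lemma bit_iff (x y : ℕ) (i : ℕ) :
    ((x ^^^ y) &&& y).testBit i = false ↔ ¬(x.testBit i = false ∧ y.testBit i = true) := by
  rw [Nat.testBit_and, Nat.testBit_xor]
  cases hx : x.testBit i <;> cases hy : y.testBit i <;> simp

private lemma char_iff (n : ℕ) (hn : 1 ≤ n) (x y : ℕ) :
    ((x ^^^ y : ℕ) : ℤ) ≡ (x : ℤ) - (y : ℤ) [ZMOD (2 ^ n : ℕ)] ↔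
      ∀ i < n - 1, ¬(x.testBit i = false ∧ y.testBit i = true) := by
  have hid := key_id x y
  set z : ℕ := (x ^^^ y) &&& y with hz
  rw [Int.modEq_iff_dvd]
  have e : (x : ℤ) - (y : ℤ) - ((x ^^^ y : ℕ) : ℤ) = -((2 * z : ℕ) : ℤ) := by
    have h2 : ((x ^^^ y : ℕ) : ℤ) + (y : ℤ) = (x : ℤ) + 2 * (z : ℤ) := by exact_mod_cast hid
    push_cast
    linarith
  rw [e, dvd_neg, Int.natCast_dvd_natCast]
  rw [show (2:ℕ) ^ n = 2 * 2 ^ (n - 1) from by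
    rw [← pow_succ']; congr 1; omega]
  rw [Nat.mul_dvd_mul_iff_left (show 0 < 2 by norm_num)]
  rw [Nat.dvd_iff_mod_eq_zero]
  constructor
  · intro h i hi
    rw [← bit_iff, ← hz]
    have ht := Nat.testBit_mod_two_pow z (n - 1) i
    rw [h, Nat.zero_testBit, decide_eq_true hi, Bool.true_and] at ht
    exact ht.symm
  · intro h
    apply Nat.eq_of_testBit_eq
    intro i
    rw [Nat.testBit_mod_two_pow, Nat.zero_testBit]
    by_cases hi : i < n - 1
    · rw [decide_eq_true hi, Bool.true_and]
      exact (bit_iff x y i).mpr (h i hi)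
    · simp [hi]

private abbrev Qpred (n : ℕ) : ℕ × ℕ → Prop :=
  fun p => ∀ i < n, ¬(p.1.testBit i = false ∧ p.2.testBit i = true)

private def allowed : Finset (ℕ × ℕ) := {(0,0),(1,0),(1,1)}

private def Fs (n : ℕ) : Finset (ℕ × ℕ) :=
  (Finset.range (2 ^ (n+1)) ×ˢ Finset.range (2 ^ (n+1))).filter (Qpred n)

private lemma mem_Fs {n : ℕ} {p : ℕ × ℕ} :
    p ∈ Fs n ↔ p.1 < 2 ^ (n+1) ∧ p.2 < 2 ^ (n+1) ∧ Qpred n p := by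
  simp [Fs, Finset.mem_filter, Finset.mem_product, and_assoc]

private lemma countFs : ∀ n : ℕ, (Fs n).card = 4 * 3 ^ n := by
  intro n
  induction n with
  | zero =>
    have h : Fs 0 = Finset.range (2 ^ 1) ×ˢ Finset.range (2 ^ 1) := by
      unfold Fs
      apply Finset.filter_true_of_mem
      intro p _ i hi
      exact absurd hi (Nat.not_lt_zero i)
    rw [h]
    simp
  | succ n ih =>
    have hstep : (Fs (n+1)).card = (allowed ×ˢ Fs n).card := by
      refine Finset.card_bij'
        (fun p _ => ((p.1 % 2, p.2 % 2), (p.1 / 2, p.2 / 2)))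
        (fun q _ => (2 * q.2.1 + q.1.1, 2 * q.2.2 + q.1.2)) ?hi ?hj ?left ?right
      case hi =>
        intro p hp
        obtain ⟨x, y⟩ := p
        rw [mem_Fs] at hp
        obtain ⟨h1, h2, hP⟩ := hp
        simp only at h1 h2 hP
        have hpow : (2:ℕ) ^ (n+1+1) = 2 * 2 ^ (n+1) := by ring
        show ((x % 2, y % 2), x / 2, y / 2) ∈ allowed ×ˢ Fs n
        rw [Finset.mem_product]
        constructor
        · have h0 := hP 0 (by omega)
          simp only [Nat.testBit_zero, decide_eq_false_iff_not, decide_eq_true_eq,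
            not_and] at h0
          simp only [allowed, Finset.mem_insert, Finset.mem_singleton, Prod.mk.injEq]
          omega
        · rw [mem_Fs]
          refine ⟨show x / 2 < 2 ^ (n+1) by omega, show y / 2 < 2 ^ (n+1) by omega, ?_⟩
          intro i hi
          show ¬((x / 2).testBit i = false ∧ (y / 2).testBit i = true)
          simp only [Nat.testBit_div_two]
          exact hP (i+1) (by omega)
      case hj =>
        intro q hq
        obtain ⟨⟨a, b⟩, ⟨u, v⟩⟩ := q
        rw [Finset.mem_product, mem_Fs] at hq
        obtain ⟨ha, h1, h2, hP⟩ := hq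
        show (2 * u + a, 2 * v + b) ∈ Fs (n + 1)
        simp only at h1 h2 hP
        simp only [allowed, Finset.mem_insert, Finset.mem_singleton, Prod.mk.injEq] at ha
        have hpow : (2:ℕ) ^ (n+1+1) = 2 * 2 ^ (n+1) := by ring
        rw [mem_Fs]
        have hb1 : a ≤ 1 := by omega
        have hb2 : b ≤ 1 := by omega
        refine ⟨by omega, by omega, ?_⟩
        intro i hi
        match i with
        | 0 =>
          simp only [Nat.testBit_zero, decide_eq_false_iff_not, decide_eq_true_eq, not_and]
          omega
        | Nat.succ i =>
          simp only [← Nat.testBit_div_two]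
          rw [show (2 * u + a) / 2 = u by omega, show (2 * v + b) / 2 = v by omega]
          exact hP i (by omega)
      case left =>
        intro p hp
        obtain ⟨x, y⟩ := p
        show (2 * (x / 2) + x % 2, 2 * (y / 2) + y % 2) = (x, y)
        simp only [Prod.mk.injEq]
        constructor <;> omega
      case right =>
        intro q hq
        obtain ⟨⟨a, b⟩, ⟨u, v⟩⟩ := q
        rw [Finset.mem_product] at hq
        have ha := hq.1
        simp only [allowed, Finset.mem_insert, Finset.mem_singleton, Prod.mk.injEq] at ha
        have hb1 : a ≤ 1 := by omega
        have hb2 : b ≤ 1 := by omega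
        show (((2 * u + a) % 2, (2 * v + b) % 2), (2 * u + a) / 2, (2 * v + b) / 2)
          = ((a, b), u, v)
        simp only [Prod.mk.injEq]
        refine ⟨⟨by omega, by omega⟩, by omega, by omega⟩
    rw [hstep, Finset.card_product, show allowed.card = 3 from by decide, ih]
    ring

open scoped Classical in
/-- For `n ≥ 1`, the number of pairs `(x, y)` of `n`-bit integers with
`x ^^^ y ≡ x - y [ZMOD 2^n]` is `4 * 3^(n-1)`; moreover this congruence holds iff
`(x_i, y_i) ≠ (0, 1)` for every `i ≤ n - 2`. -/
theorem card_xor_modEq_sub (n : ℕ) (hn : 1 ≤ n) :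
    ((Finset.range (2 ^ n) ×ˢ Finset.range (2 ^ n)).filter
      (fun p : ℕ × ℕ =>
        ((p.1 ^^^ p.2 : ℕ) : ℤ) ≡ (p.1 : ℤ) - (p.2 : ℤ) [ZMOD (2 ^ n : ℕ)])).card
      = 4 * 3 ^ (n - 1) ∧
    (∀ x y : ℕ, x < 2 ^ n → y < 2 ^ n →
      (((x ^^^ y : ℕ) : ℤ) ≡ (x : ℤ) - (y : ℤ) [ZMOD (2 ^ n : ℕ)] ↔
        ∀ i < n - 1, ¬(x.testBit i = false ∧ y.testBit i = true))) := by
  obtain ⟨m, rfl⟩ : ∃ m, n = m + 1 := ⟨n - 1, by omega⟩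
  refine ⟨?_, fun x y _ _ => char_iff (m+1) (by omega) x y⟩
  rw [Finset.filter_congr (fun p _ => char_iff (m+1) (by omega) p.1 p.2)]
  simp only [Nat.add_sub_cancel]
  convert countFs m using 2
  unfold Fs Qpred
  congr 1
end

section
/- Let n ≥ 1 be a natural number and let X be the set of pairs (x, y) of n-bit integers. Define A' = {(x,y) ∈ X : x ⊕ y ≡ x + y (mod 2^n)}, B' = {(x,y) ∈ X : x ⊕ y ≡ x − y (mod 2^n)}, C' = {(x,y) ∈ X : x ⊕ y ≡ y − x (mod 2^n)}, where the congruences are taken in the integers. Then #A' = #B' = #C' = 4·3^(n−1), #(A' ∩ B') = #(B' ∩ C') = #(C' ∩ A') = 4·2^(n−1), #(A' ∩ B' ∩ C') = 4, and #(A' ∪ B' ∪ C') = 4·(3·3^(n−1) − 3·2^(n−1) + 1). -/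
open Finset

private lemma halfadd : ∀ x y : ℕ, x + y = (x ^^^ y) + 2 * (x &&& y) := by
  intro x
  induction x using Nat.strong_induction_on with
  | _ x ih =>
    intro y
    rcases Nat.eq_zero_or_pos x with h | h
    · simp [h]
    · have hx2 : x / 2 < x := Nat.div_lt_self h (by norm_num)
      have H := ih (x / 2) hx2 (y / 2)
      have e1 : (x ^^^ y) / 2 = x / 2 ^^^ y / 2 := Nat.xor_div_two
      have e2 : (x &&& y) / 2 = x / 2 &&& y / 2 := Nat.and_div_two
      have h1 : (x ^^^ y) % 2 = 1 ↔ ¬(x % 2 = 1 ↔ y % 2 = 1) := Nat.xor_mod_two_eq_one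
      have h2 : (x &&& y) % 2 = 1 ↔ (x % 2 = 1 ∧ y % 2 = 1) := Nat.and_mod_two_eq_one
      omega

private lemma subid (x y : ℕ) : y - (x &&& y) = y ^^^ (x &&& y) := by
  have hb : (y ^^^ (x &&& y)) &&& (x &&& y) = 0 := by
    apply Nat.eq_of_testBit_eq
    intro i
    simp only [Nat.testBit_land, Nat.testBit_xor, Nat.zero_testBit]
    cases x.testBit i <;> cases y.testBit i <;> rfl
  have hx : (y ^^^ (x &&& y)) ^^^ (x &&& y) = y := by
    apply Nat.eq_of_testBit_eq
    intro i
    simp only [Nat.testBit_land, Nat.testBit_xor]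
    cases x.testBit i <;> cases y.testBit i <;> rfl
  have := halfadd (y ^^^ (x &&& y)) (x &&& y)
  rw [hb, hx] at this
  omega

private lemma mod_pow_eq_zero_iff (x m : ℕ) : x % 2 ^ m = 0 ↔ ∀ i < m, x.testBit i = false := by
  constructor
  · intro h i hi
    have := congrArg (fun z => z.testBit i) h
    simpa [Nat.testBit_mod_two_pow, hi] using this
  · intro h
    apply Nat.eq_of_testBit_eq
    intro i
    rw [Nat.testBit_mod_two_pow, Nat.zero_testBit]
    by_cases hi : i < m
    · simp [hi, h i hi]
    · simp [hi]

private lemma dvd_two_mul_iff_bits (m : ℕ) (z : ℕ) :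
    ((2 : ℤ) ^ (m + 1) ∣ 2 * (z : ℤ)) ↔ ∀ i < m, z.testBit i = false := by
  rw [pow_succ, mul_comm ((2:ℤ)^m) 2, mul_dvd_mul_iff_left (by norm_num : (2:ℤ) ≠ 0)]
  rw [show ((2:ℤ)^m) = ((2^m : ℕ) : ℤ) by push_cast; ring, Int.natCast_dvd_natCast]
  rw [Nat.dvd_iff_mod_eq_zero]
  exact mod_pow_eq_zero_iff z m

open scoped Classical in
private lemma countFull (f : Bool → Bool → Bool) (hf : f false false = false) (m : ℕ) :
    ((range (2 ^ m) ×ˢ range (2 ^ m)).filter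
      (fun p : ℕ × ℕ => ∀ i, f (p.1.testBit i) (p.2.testBit i) = false)).card
    = ((univ : Finset (Bool × Bool)).filter (fun q => f q.1 q.2 = false)).card ^ m := by
  induction m with
  | zero =>
    rw [pow_zero, pow_zero, Finset.range_one, Finset.singleton_product_singleton,
      Finset.filter_singleton]
    simp [Nat.zero_testBit, hf]
  | succ m ih =>
    conv_rhs => rw [pow_succ, ← ih]
    rw [← Finset.card_product]
    refine Finset.card_bij' (fun p _ => ((p.1 / 2, p.2 / 2), (p.1.testBit 0, p.2.testBit 0)))
      (fun q _ => (2 * q.1.1 + q.2.1.toNat, 2 * q.1.2 + q.2.2.toNat)) ?_ ?_ ?_ ?_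
    · rintro ⟨x, y⟩ ha
      simp only [Finset.mem_filter, Finset.mem_product, Finset.mem_range] at ha ⊢
      obtain ⟨⟨hx, hy⟩, hc⟩ := ha
      refine ⟨⟨⟨?_, ?_⟩, fun i => ?_⟩, ?_⟩
      · have : (2:ℕ)^(m+1) = 2 * 2^m := by ring
        omega
      · have : (2:ℕ)^(m+1) = 2 * 2^m := by ring
        omega
      · have := hc (i + 1)
        simpa [Nat.testBit_succ] using this
      · simp only [Finset.mem_filter, Finset.mem_univ, true_and]
        have := hc 0
        simpa [Nat.testBit_zero] using this
    · rintro ⟨⟨a, c⟩, ⟨b, d⟩⟩ ha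
      simp only [Finset.mem_filter, Finset.mem_product, Finset.mem_range, Finset.mem_univ,
        true_and] at ha ⊢
      obtain ⟨⟨⟨hha, hhc⟩, hcond⟩, hK⟩ := ha
      have hb := Bool.toNat_lt b
      have hd := Bool.toNat_lt d
      have h2 : (2:ℕ)^(m+1) = 2 * 2^m := by ring
      refine ⟨⟨by omega, by omega⟩, fun i => ?_⟩
      cases i with
      | zero =>
        have e1 : (2 * a + b.toNat).testBit 0 = b := by
          cases b <;> simp [Nat.testBit_zero] <;> omega
        have e2 : (2 * c + d.toNat).testBit 0 = d := by
          cases d <;> simp [Nat.testBit_zero] <;> omega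
        rw [e1, e2]; exact hK
      | succ i =>
        have e1 : (2 * a + b.toNat) / 2 = a := by omega
        have e2 : (2 * c + d.toNat) / 2 = c := by omega
        rw [Nat.testBit_succ, Nat.testBit_succ, e1, e2]
        exact hcond i
    · rintro ⟨x, y⟩ ha
      have e1 : 2 * (x / 2) + (x.testBit 0).toNat = x := by
        rw [Nat.testBit_zero]
        rcases Nat.mod_two_eq_zero_or_one x with h | h <;> simp [h] <;> omega
      have e2 : 2 * (y / 2) + (y.testBit 0).toNat = y := by
        rw [Nat.testBit_zero]
        rcases Nat.mod_two_eq_zero_or_one y with h | h <;> simp [h] <;> omega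
      show (2 * (x / 2) + (x.testBit 0).toNat, 2 * (y / 2) + (y.testBit 0).toNat) = (x, y)
      rw [e1, e2]
    · rintro ⟨⟨a, c⟩, ⟨b, d⟩⟩ ha
      have hb := Bool.toNat_lt b
      have hd := Bool.toNat_lt d
      have e1 : (2 * a + b.toNat) / 2 = a := by omega
      have e2 : (2 * c + d.toNat) / 2 = c := by omega
      have e3 : (2 * a + b.toNat).testBit 0 = b := by
        cases b <;> simp [Nat.testBit_zero] <;> omega
      have e4 : (2 * c + d.toNat).testBit 0 = d := by
        cases d <;> simp [Nat.testBit_zero] <;> omega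
      simp [e1, e2, e3, e4]

open scoped Classical in
private lemma countTop (f : Bool → Bool → Bool) (hf : f false false = false) (m : ℕ) :
    ((range (2 ^ (m + 1)) ×ˢ range (2 ^ (m + 1))).filter
      (fun p : ℕ × ℕ => ∀ i < m, f (p.1.testBit i) (p.2.testBit i) = false)).card
    = 4 * ((univ : Finset (Bool × Bool)).filter (fun q => f q.1 q.2 = false)).card ^ m := by
  have h4 : ((range 2 ×ˢ range 2 : Finset (ℕ × ℕ))).card = 4 := by simp
  rw [← countFull f hf m, ← h4, ← Finset.card_product]
  have hpow : (2:ℕ) ^ (m + 1) = 2 ^ m * 2 := by ring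
  have hpos : 0 < (2:ℕ) ^ m := Nat.pow_pos (by norm_num)
  refine Finset.card_bij'
    (fun p _ => ((p.1 / 2 ^ m, p.2 / 2 ^ m), (p.1 % 2 ^ m, p.2 % 2 ^ m)))
    (fun q _ => (q.2.1 + 2 ^ m * q.1.1, q.2.2 + 2 ^ m * q.1.2)) ?_ ?_ ?_ ?_
  · rintro ⟨x, y⟩ ha
    simp only [Finset.mem_filter, Finset.mem_product, Finset.mem_range] at ha ⊢
    obtain ⟨⟨hx, hy⟩, hc⟩ := ha
    refine ⟨⟨(Nat.div_lt_iff_lt_mul hpos).2 (by omega), (Nat.div_lt_iff_lt_mul hpos).2 (by omega)⟩,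
      ⟨Nat.mod_lt _ hpos, Nat.mod_lt _ hpos⟩, fun i => ?_⟩
    rw [Nat.testBit_mod_two_pow, Nat.testBit_mod_two_pow]
    by_cases hi : i < m
    · simpa [hi] using hc i hi
    · simp [hi, hf]
  · rintro ⟨⟨b, d⟩, ⟨a, c⟩⟩ ha
    simp only [Finset.mem_filter, Finset.mem_product, Finset.mem_range] at ha ⊢
    obtain ⟨⟨hb, hd⟩, ⟨ha', hc'⟩, hcond⟩ := ha
    have hble : 2 ^ m * b ≤ 2 ^ m * 1 := Nat.mul_le_mul_left _ (by omega)
    have hdle : 2 ^ m * d ≤ 2 ^ m * 1 := Nat.mul_le_mul_left _ (by omega)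
    refine ⟨⟨by omega, by omega⟩, fun i hi => ?_⟩
    have m1 : (a + 2 ^ m * b) % 2 ^ m = a := by
      rw [Nat.add_mul_mod_self_left, Nat.mod_eq_of_lt ha']
    have m2 : (c + 2 ^ m * d) % 2 ^ m = c := by
      rw [Nat.add_mul_mod_self_left, Nat.mod_eq_of_lt hc']
    have e1 : (a + 2 ^ m * b).testBit i = a.testBit i := by
      conv_rhs => rw [← m1]
      rw [Nat.testBit_mod_two_pow]
      simp [hi]
    have e2 : (c + 2 ^ m * d).testBit i = c.testBit i := by
      conv_rhs => rw [← m2]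
      rw [Nat.testBit_mod_two_pow]
      simp [hi]
    rw [e1, e2]
    exact hcond i
  · rintro ⟨x, y⟩ ha
    show (x % 2 ^ m + 2 ^ m * (x / 2 ^ m), y % 2 ^ m + 2 ^ m * (y / 2 ^ m)) = (x, y)
    rw [Nat.mod_add_div, Nat.mod_add_div]
  · rintro ⟨⟨b, d⟩, ⟨a, c⟩⟩ ha
    simp only [Finset.mem_filter, Finset.mem_product, Finset.mem_range] at ha
    obtain ⟨⟨hb, hd⟩, ⟨ha', hc'⟩, hcond⟩ := ha
    show (((a + 2 ^ m * b) / 2 ^ m, (c + 2 ^ m * d) / 2 ^ m),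
        ((a + 2 ^ m * b) % 2 ^ m, (c + 2 ^ m * d) % 2 ^ m)) = ((b, d), (a, c))
    have d1 : (a + 2 ^ m * b) / 2 ^ m = b := by
      rw [Nat.add_mul_div_left _ _ hpos, Nat.div_eq_of_lt ha', Nat.zero_add]
    have d2 : (c + 2 ^ m * d) / 2 ^ m = d := by
      rw [Nat.add_mul_div_left _ _ hpos, Nat.div_eq_of_lt hc', Nat.zero_add]
    have m1 : (a + 2 ^ m * b) % 2 ^ m = a := by
      rw [Nat.add_mul_mod_self_left, Nat.mod_eq_of_lt ha']
    have m2 : (c + 2 ^ m * d) % 2 ^ m = c := by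
      rw [Nat.add_mul_mod_self_left, Nat.mod_eq_of_lt hc']
    rw [d1, d2, m1, m2]

private lemma countTop' (f : Bool → Bool → Bool) (hf : f false false = false) (k m : ℕ)
    (hk : ((univ : Finset (Bool × Bool)).filter (fun q => f q.1 q.2 = false)).card = k) :
    ((range (2 ^ (m + 1)) ×ˢ range (2 ^ (m + 1))).filter
      (fun p : ℕ × ℕ => ∀ i < m, f (p.1.testBit i) (p.2.testBit i) = false)).card = 4 * k ^ m := by
  rw [← hk]; exact countTop f hf m

open scoped Classical in
/-- Counting theorem for `x ^^^ y` versus `x + y`, `x - y`, `y - x` modulo `2^n`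
among pairs of `n`-bit integers, for `n ≥ 1`. -/
theorem card_xor_add_sub_mod_counts (n : ℕ) (hn : 1 ≤ n) :
    let X := Finset.range (2 ^ n) ×ˢ Finset.range (2 ^ n)
    let A' := X.filter (fun p : ℕ × ℕ =>
      ((p.1 ^^^ p.2 : ℕ) : ℤ) ≡ (p.1 : ℤ) + (p.2 : ℤ) [ZMOD (2 ^ n : ℕ)])
    let B' := X.filter (fun p : ℕ × ℕ =>
      ((p.1 ^^^ p.2 : ℕ) : ℤ) ≡ (p.1 : ℤ) - (p.2 : ℤ) [ZMOD (2 ^ n : ℕ)])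
    let C' := X.filter (fun p : ℕ × ℕ =>
      ((p.1 ^^^ p.2 : ℕ) : ℤ) ≡ (p.2 : ℤ) - (p.1 : ℤ) [ZMOD (2 ^ n : ℕ)])
    A'.card = 4 * 3 ^ (n - 1) ∧ B'.card = 4 * 3 ^ (n - 1) ∧ C'.card = 4 * 3 ^ (n - 1) ∧
    (A' ∩ B').card = 4 * 2 ^ (n - 1) ∧ (B' ∩ C').card = 4 * 2 ^ (n - 1) ∧
    (C' ∩ A').card = 4 * 2 ^ (n - 1) ∧
    (A' ∩ B' ∩ C').card = 4 ∧
    ((A' ∪ B' ∪ C').card : ℤ) = 4 * (3 * 3 ^ (n - 1) - 3 * 2 ^ (n - 1) + 1) := by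
  intro X A' B' C'
  obtain ⟨m, rfl⟩ : ∃ m, n = m + 1 := ⟨n - 1, by omega⟩
  simp only [Nat.add_sub_cancel]
  have hpowcast : (((2 ^ (m + 1) : ℕ) : ℤ)) = (2 : ℤ) ^ (m + 1) := by push_cast; ring
  have hA : A' = X.filter (fun p : ℕ × ℕ =>
      ∀ i < m, (p.1.testBit i && p.2.testBit i) = false) := by
    apply Finset.filter_congr
    rintro ⟨x, y⟩ _
    have h := halfadd x y
    have key : ((x : ℤ) + (y : ℤ)) - ((x ^^^ y : ℕ) : ℤ) = 2 * ((x &&& y : ℕ) : ℤ) := by omega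
    rw [Int.modEq_iff_dvd, key, hpowcast, dvd_two_mul_iff_bits]
    simp [Nat.testBit_land]
  have hB : B' = X.filter (fun p : ℕ × ℕ =>
      ∀ i < m, (p.2.testBit i && !p.1.testBit i) = false) := by
    apply Finset.filter_congr
    rintro ⟨x, y⟩ _
    have h := halfadd x y
    have hle : x &&& y ≤ y := Nat.and_le_right
    have hs := subid x y
    have key : ((x : ℤ) - (y : ℤ)) - ((x ^^^ y : ℕ) : ℤ)
        = -(2 * ((y ^^^ (x &&& y) : ℕ) : ℤ)) := by omega
    rw [Int.modEq_iff_dvd, key, dvd_neg, hpowcast, dvd_two_mul_iff_bits]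
    constructor <;> intro h' i hi <;> have hh := h' i hi <;> revert hh <;>
      simp only [Nat.testBit_xor, Nat.testBit_land] <;>
      cases x.testBit i <;> cases y.testBit i <;> simp
  have hC : C' = X.filter (fun p : ℕ × ℕ =>
      ∀ i < m, (p.1.testBit i && !p.2.testBit i) = false) := by
    apply Finset.filter_congr
    rintro ⟨x, y⟩ _
    have h := halfadd x y
    have hle : y &&& x ≤ x := Nat.and_le_right
    have hs := subid y x
    have hcomm : y &&& x = x &&& y := Nat.land_comm y x
    rw [hcomm] at hs hle
    have key : ((y : ℤ) - (x : ℤ)) - ((x ^^^ y : ℕ) : ℤ)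
        = -(2 * ((x ^^^ (x &&& y) : ℕ) : ℤ)) := by omega
    rw [Int.modEq_iff_dvd, key, dvd_neg, hpowcast, dvd_two_mul_iff_bits]
    constructor <;> intro h' i hi <;> have hh := h' i hi <;> revert hh <;>
      simp only [Nat.testBit_xor, Nat.testBit_land] <;>
      cases x.testBit i <;> cases y.testBit i <;> simp
  have hAB : A' ∩ B' = X.filter (fun p : ℕ × ℕ => ∀ i < m, p.2.testBit i = false) := by
    rw [hA, hB, ← Finset.filter_and]
    apply Finset.filter_congr
    rintro ⟨x, y⟩ _
    constructor
    · rintro ⟨h1, h2⟩ i hi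
      have a1 := h1 i hi; have a2 := h2 i hi
      revert a1 a2; cases x.testBit i <;> cases y.testBit i <;> simp
    · intro h
      refine ⟨fun i hi => ?_, fun i hi => ?_⟩ <;> have hh := h i hi <;> revert hh <;>
        cases x.testBit i <;> cases y.testBit i <;> simp
  have hBC : B' ∩ C' = X.filter (fun p : ℕ × ℕ =>
      ∀ i < m, (p.1.testBit i != p.2.testBit i) = false) := by
    rw [hB, hC, ← Finset.filter_and]
    apply Finset.filter_congr
    rintro ⟨x, y⟩ _
    constructor
    · rintro ⟨h1, h2⟩ i hi
      have a1 := h1 i hi; have a2 := h2 i hi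
      revert a1 a2; cases x.testBit i <;> cases y.testBit i <;> simp
    · intro h
      refine ⟨fun i hi => ?_, fun i hi => ?_⟩ <;> have hh := h i hi <;> revert hh <;>
        cases x.testBit i <;> cases y.testBit i <;> simp
  have hCA : C' ∩ A' = X.filter (fun p : ℕ × ℕ => ∀ i < m, p.1.testBit i = false) := by
    rw [hC, hA, ← Finset.filter_and]
    apply Finset.filter_congr
    rintro ⟨x, y⟩ _
    constructor
    · rintro ⟨h1, h2⟩ i hi
      have a1 := h1 i hi; have a2 := h2 i hi
      revert a1 a2; cases x.testBit i <;> cases y.testBit i <;> simp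
    · intro h
      refine ⟨fun i hi => ?_, fun i hi => ?_⟩ <;> have hh := h i hi <;> revert hh <;>
        cases x.testBit i <;> cases y.testBit i <;> simp
  have hABC : A' ∩ B' ∩ C' = X.filter (fun p : ℕ × ℕ =>
      ∀ i < m, (p.1.testBit i || p.2.testBit i) = false) := by
    rw [hAB, hC, ← Finset.filter_and]
    apply Finset.filter_congr
    rintro ⟨x, y⟩ _
    constructor
    · rintro ⟨h1, h2⟩ i hi
      have a1 := h1 i hi; have a2 := h2 i hi
      revert a1 a2; cases x.testBit i <;> cases y.testBit i <;> simp
    · intro h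
      refine ⟨fun i hi => ?_, fun i hi => ?_⟩ <;> have hh := h i hi <;> revert hh <;>
        cases x.testBit i <;> cases y.testBit i <;> simp
  have cA : A'.card = 4 * 3 ^ m := by
    rw [hA]; exact countTop' (fun a b => a && b) rfl 3 m (by decide)
  have cB : B'.card = 4 * 3 ^ m := by
    rw [hB]; exact countTop' (fun a b => b && !a) rfl 3 m (by decide)
  have cC : C'.card = 4 * 3 ^ m := by
    rw [hC]; exact countTop' (fun a b => a && !b) rfl 3 m (by decide)
  have cAB : (A' ∩ B').card = 4 * 2 ^ m := by
    rw [hAB]; exact countTop' (fun _ b => b) rfl 2 m (by decide)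
  have cBC : (B' ∩ C').card = 4 * 2 ^ m := by
    rw [hBC]; exact countTop' (fun a b => a != b) rfl 2 m (by decide)
  have cCA : (C' ∩ A').card = 4 * 2 ^ m := by
    rw [hCA]; exact countTop' (fun a _ => a) rfl 2 m (by decide)
  have cABC : (A' ∩ B' ∩ C').card = 4 := by
    rw [hABC]
    have := countTop' (fun a b => a || b) rfl 1 m (by decide)
    simpa using this
  refine ⟨cA, cB, cC, cAB, cBC, cCA, cABC, ?_⟩
  have h1 := Finset.card_union_add_card_inter A' B'
  have h2 := Finset.card_union_add_card_inter (A' ∪ B') C'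
  have h3 : (A' ∪ B') ∩ C' = (A' ∩ C') ∪ (B' ∩ C') :=
    Finset.union_inter_distrib_right A' B' C'
  have h4 := Finset.card_union_add_card_inter (A' ∩ C') (B' ∩ C')
  have h5 : (A' ∩ C') ∩ (B' ∩ C') = A' ∩ B' ∩ C' := by
    ext p; simp only [Finset.mem_inter]; tauto
  have h6 : (A' ∩ C').card = (C' ∩ A').card := by rw [Finset.inter_comm]
  rw [h3] at h2
  rw [h5] at h4
  have hval : (A' ∪ B' ∪ C').card + (4 * 2 ^ m + 4 * 2 ^ m + 4 * 2 ^ m)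
      = 4 * 3 ^ m + 4 * 3 ^ m + 4 * 3 ^ m + 4 := by omega
  have := congrArg (fun z : ℕ => (z : ℤ)) hval
  push_cast at this
  push_cast
  linarith
end

section
/- Let n be a natural number, let u, v, w be n-bit integers, and let p, q, r ∈ {1, −1}. Then the equality u ⊕ v ⊕ w = p·u + q·v + r·w holds in the integers if and only if p·u_i + q·v_i + r·w_i ∈ {0, 1} for every position i with 0 ≤ i ≤ n − 1. -/
open Finset

private lemma xorsum_bitsum : ∀ (n m : ℕ), m < 2 ^ n →
    (m : ℤ) = ∑ i ∈ range n, (if m.testBit i then (1 : ℤ) else 0) * 2 ^ i := by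
  intro n
  induction n with
  | zero => intro m hm; interval_cases m; simp
  | succ n ih =>
    intro m hm
    rw [Finset.sum_range_succ' _ n]
    have h2 : m / 2 < 2 ^ n := by
      have : 2 ^ (n+1) = 2 ^ n * 2 := by ring
      omega
    have hrec := ih (m / 2) h2
    have hbit : ∀ i, m.testBit (i + 1) = (m / 2).testBit i := by
      intro i; simp [Nat.testBit_succ]
    have hbit0 : m.testBit 0 = decide (m % 2 = 1) := by
      simp [Nat.testBit_zero]
    have hm2 : (m : ℤ) = 2 * (m / 2 : ℕ) + (m % 2 : ℕ) := by
      push_cast; omega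
    rw [hm2, hrec]
    simp only [hbit, hbit0, pow_succ, pow_zero]
    rw [Finset.mul_sum]
    have hterm : ∀ x ∈ range n, 2 * ((if (m / 2).testBit x then (1:ℤ) else 0) * 2 ^ x)
        = (if (m / 2).testBit x then (1:ℤ) else 0) * (2 ^ x * 2) := by
      intros; ring
    rw [Finset.sum_congr rfl hterm]
    rcases Nat.mod_two_eq_zero_or_one m with h | h <;> simp [h]

private lemma xorsum_powsum (n : ℕ) : ∑ i ∈ range n, (2:ℤ) ^ i = 2 ^ n - 1 := by
  induction n with
  | zero => simp
  | succ n ih => rw [Finset.sum_range_succ, ih]; ring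

private lemma xorsum_uniq (d : ℕ → ℤ) : ∀ n, (∀ i < n, d i = -2 ∨ d i = 0 ∨ d i = 2) →
    ∑ i ∈ range n, d i * 2 ^ i = 0 → ∀ i < n, d i = 0 := by
  intro n
  induction n with
  | zero => intro _ _ i hi; omega
  | succ n ih =>
    intro hd hsum
    have hbound : |∑ i ∈ range n, d i * 2 ^ i| ≤ 2 * (2 ^ n - 1) := by
      calc |∑ i ∈ range n, d i * 2 ^ i| ≤ ∑ i ∈ range n, |d i * 2 ^ i| :=
            Finset.abs_sum_le_sum_abs _ _
        _ ≤ ∑ i ∈ range n, 2 * 2 ^ i := by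
            apply Finset.sum_le_sum
            intro i hi
            simp only [Finset.mem_range] at hi
            have := hd i (by omega)
            rw [abs_mul]
            have h2 : |(2:ℤ) ^ i| = 2 ^ i := abs_of_nonneg (by positivity)
            have : |d i| ≤ 2 := by rcases this with h|h|h <;> norm_num [h]
            nlinarith [pow_pos (by norm_num : (0:ℤ) < 2) i]
        _ = 2 * (2 ^ n - 1) := by
            rw [← Finset.mul_sum]
            rw [xorsum_powsum]
    rw [Finset.sum_range_succ] at hsum
    have hpow : (0:ℤ) < 2 ^ n := by positivity
    have hdn : d n = 0 := by
      rcases hd n (by omega) with h | h | h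
      · rw [h] at hsum
        have : |∑ i ∈ range n, d i * 2 ^ i| = 2 * 2 ^ n := by
          rw [abs_of_nonneg] <;> linarith
        linarith [abs_le.mp hbound |>.2, (this ▸ hbound)]
      · exact h
      · rw [h] at hsum
        have : |∑ i ∈ range n, d i * 2 ^ i| = 2 * 2 ^ n := by
          rw [abs_of_nonpos] <;> linarith
        linarith [(this ▸ hbound)]
    rw [hdn] at hsum
    simp at hsum
    have := ih (fun i hi => hd i (by omega)) hsum
    intro i hi
    rcases Nat.lt_succ_iff_lt_or_eq.mp hi with h | h
    · exact this i h
    · rw [h]; exact hdn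

private lemma xorsum_perbit1 (p q r : ℤ) (hp : p = 1 ∨ p = -1) (hq : q = 1 ∨ q = -1)
    (hr : r = 1 ∨ r = -1) (a b c : Bool) :
    (p * (if a then (1:ℤ) else 0) + q * (if b then (1:ℤ) else 0) +
       r * (if c then (1:ℤ) else 0) = 0 ∨
     p * (if a then (1:ℤ) else 0) + q * (if b then (1:ℤ) else 0) +
       r * (if c then (1:ℤ) else 0) = 1) ↔
    (if (a ^^ b) ^^ c then (1:ℤ) else 0) =
      p * (if a then (1:ℤ) else 0) + q * (if b then (1:ℤ) else 0) +
      r * (if c then (1:ℤ) else 0) := by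
  rcases hp with rfl|rfl <;> rcases hq with rfl|rfl <;> rcases hr with rfl|rfl <;>
    cases a <;> cases b <;> cases c <;> norm_num

private lemma xorsum_perbit2 (p q r : ℤ) (hp : p = 1 ∨ p = -1) (hq : q = 1 ∨ q = -1)
    (hr : r = 1 ∨ r = -1) (hA : ¬(p = -1 ∧ q = -1 ∧ r = -1)) (a b c : Bool) :
    (if (a ^^ b) ^^ c then (1:ℤ) else 0) -
      (p * (if a then (1:ℤ) else 0) + q * (if b then (1:ℤ) else 0) +
       r * (if c then (1:ℤ) else 0)) = -2 ∨
    (if (a ^^ b) ^^ c then (1:ℤ) else 0) -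
      (p * (if a then (1:ℤ) else 0) + q * (if b then (1:ℤ) else 0) +
       r * (if c then (1:ℤ) else 0)) = 0 ∨
    (if (a ^^ b) ^^ c then (1:ℤ) else 0) -
      (p * (if a then (1:ℤ) else 0) + q * (if b then (1:ℤ) else 0) +
       r * (if c then (1:ℤ) else 0)) = 2 := by
  rcases hp with rfl|rfl <;> rcases hq with rfl|rfl <;> rcases hr with rfl|rfl <;>
    cases a <;> cases b <;> cases c <;> norm_num
      <;>
      exact hA ⟨rfl, rfl, rfl⟩

/-- For `n`-bit integers `u, v, w` and signs `p, q, r ∈ {1, -1}`, the equality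
`u ^^^ v ^^^ w = p*u + q*v + r*w` holds in `ℤ` iff `p*u_i + q*v_i + r*w_i ∈ {0, 1}`
for every bit position `i < n`. -/
theorem xor_three_eq_signed_sum_iff (n : ℕ) (u v w : ℕ)
    (hu : u < 2 ^ n) (hv : v < 2 ^ n) (hw : w < 2 ^ n)
    (p q r : ℤ) (hp : p = 1 ∨ p = -1) (hq : q = 1 ∨ q = -1) (hr : r = 1 ∨ r = -1) :
    ((u ^^^ v ^^^ w : ℕ) : ℤ) = p * (u : ℤ) + q * (v : ℤ) + r * (w : ℤ) ↔
    ∀ i < n,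
      p * (if u.testBit i then (1 : ℤ) else 0) +
      q * (if v.testBit i then (1 : ℤ) else 0) +
      r * (if w.testBit i then (1 : ℤ) else 0) ∈ ({0, 1} : Set ℤ) := by
  have hx : u ^^^ v ^^^ w < 2 ^ n := Nat.xor_lt_two_pow (Nat.xor_lt_two_pow hu hv) hw
  have hxv : ∀ i, (u ^^^ v ^^^ w).testBit i = ((u.testBit i ^^ v.testBit i) ^^ w.testBit i) := by
    intro i; simp [Nat.testBit_xor]
  set d : ℕ → ℤ := fun i =>
    (if (u.testBit i ^^ v.testBit i) ^^ w.testBit i then (1:ℤ) else 0) -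
      (p * (if u.testBit i then (1:ℤ) else 0) + q * (if v.testBit i then (1:ℤ) else 0) +
       r * (if w.testBit i then (1:ℤ) else 0)) with hd
  have hkey : ((u ^^^ v ^^^ w : ℕ) : ℤ) - (p * (u : ℤ) + q * (v : ℤ) + r * (w : ℤ)) =
      ∑ i ∈ range n, d i * 2 ^ i := by
    rw [xorsum_bitsum n _ hx, xorsum_bitsum n u hu, xorsum_bitsum n v hv, xorsum_bitsum n w hw]
    simp only [hxv, Finset.mul_sum, ← Finset.sum_sub_distrib, ← Finset.sum_add_distrib]
    apply Finset.sum_congr rfl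
    intros; simp only [hd]; ring
  simp only [Set.mem_insert_iff, Set.mem_singleton_iff]
  constructor
  · intro h i hi
    by_cases hA : p = -1 ∧ q = -1 ∧ r = -1
    · obtain ⟨rfl, rfl, rfl⟩ := hA
      have hX0 : (0:ℤ) ≤ ((u ^^^ v ^^^ w : ℕ) : ℤ) := Int.natCast_nonneg _
      have hu0 : u = 0 := by omega
      have hv0 : v = 0 := by omega
      have hw0 : w = 0 := by omega
      simp [hu0, hv0, hw0, Nat.zero_testBit]
    · have hsum0 : ∑ i ∈ range n, d i * 2 ^ i = 0 := by rw [← hkey]; linarith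
      have hvals : ∀ i < n, d i = -2 ∨ d i = 0 ∨ d i = 2 := by
        intro j hj
        exact xorsum_perbit2 p q r hp hq hr hA _ _ _
      have hdi0 := xorsum_uniq d n hvals hsum0 i hi
      have : (if (u.testBit i ^^ v.testBit i) ^^ w.testBit i then (1:ℤ) else 0) =
          p * (if u.testBit i then (1:ℤ) else 0) + q * (if v.testBit i then (1:ℤ) else 0) +
          r * (if w.testBit i then (1:ℤ) else 0) := by
        have := hdi0
        simp only [hd] at this
        linarith
      exact (xorsum_perbit1 p q r hp hq hr _ _ _).mpr this
  · intro h
    have hz : ∀ i ∈ range n, d i * 2 ^ i = 0 := by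
      intro i hi
      simp only [Finset.mem_range] at hi
      have hdi : d i = 0 := by
        have := (xorsum_perbit1 p q r hp hq hr (u.testBit i) (v.testBit i) (w.testBit i)).mp
          (h i hi)
        simp only [hd]
        linarith
      rw [hdi, zero_mul]
    have : ∑ i ∈ range n, d i * 2 ^ i = 0 := Finset.sum_eq_zero hz
    linarith [hkey, this]
end

section
/- Let n be a natural number. For n-bit integers u, v, w, the equality u ⊕ v ⊕ w = −u + v + w holds in the integers if and only if for every position i with 0 ≤ i ≤ n − 1 the triple of bits (u_i, v_i, w_i) is one of (0,0,0), (0,0,1), (0,1,0), (1,0,1), (1,1,0), (1,1,1); moreover, the number of triples (u, v, w) of n-bit integers satisfying u ⊕ v ⊕ w = −u + v + w equals 6^n (out of 8^n triples in total). -/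


lemma bit_xor (a b x y : ℕ) (hx : x < 2) (hy : y < 2) :
    (2*a+x) ^^^ (2*b+y) = 2*(a ^^^ b) + (x ^^^ y) := by
  apply Nat.eq_of_testBit_eq
  intro i
  have hxy : x ^^^ y < 2 := by interval_cases x <;> interval_cases y <;> simp_all <;> omega
  cases i with
  | zero =>
    have m1 : (2*a+x)%2 = x := by omega
    have m2 : (2*b+y)%2 = y := by omega
    have m3 : (2*(a ^^^ b)+(x ^^^ y))%2 = x ^^^ y := by omega
    rw [Nat.testBit_xor]
    simp only [Nat.testBit_zero, m1, m2, m3]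
    interval_cases x <;> interval_cases y <;> simp_all <;> omega
  | succ i =>
    have h1 : (2*a+x)/2 = a := by omega
    have h2 : (2*b+y)/2 = b := by omega
    have h3 : (2*(a ^^^ b)+(x ^^^ y))/2 = a ^^^ b := by omega
    rw [Nat.testBit_xor]
    simp only [Nat.testBit_add_one, h1, h2, h3, Nat.testBit_xor]

lemma bit_and (a b x y : ℕ) (hx : x < 2) (hy : y < 2) :
    (2*a+x) &&& (2*b+y) = 2*(a &&& b) + (x &&& y) := by
  apply Nat.eq_of_testBit_eq
  intro i
  have hxy : x &&& y < 2 := by interval_cases x <;> interval_cases y <;> simp_all <;> omega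
  cases i with
  | zero =>
    have m1 : (2*a+x)%2 = x := by omega
    have m2 : (2*b+y)%2 = y := by omega
    have m3 : (2*(a &&& b)+(x &&& y))%2 = x &&& y := by omega
    rw [Nat.testBit_and]
    simp only [Nat.testBit_zero, m1, m2, m3]
    interval_cases x <;> interval_cases y <;> simp_all <;> omega
  | succ i =>
    have h1 : (2*a+x)/2 = a := by omega
    have h2 : (2*b+y)/2 = b := by omega
    have h3 : (2*(a &&& b)+(x &&& y))/2 = a &&& b := by omega
    rw [Nat.testBit_and]
    simp only [Nat.testBit_add_one, h1, h2, h3, Nat.testBit_and]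

lemma add_eq_xor_add (a : ℕ) : ∀ b, a + b = (a ^^^ b) + 2 * (a &&& b) := by
  induction a using Nat.strong_induction_on with
  | _ a ih =>
    intro b
    rcases Nat.eq_zero_or_pos a with rfl | ha
    · simp
    have hx : a % 2 < 2 := Nat.mod_lt _ (by norm_num)
    have hy : b % 2 < 2 := Nat.mod_lt _ (by norm_num)
    have ea : a = 2*(a/2) + a%2 := by omega
    have eb : b = 2*(b/2) + b%2 := by omega
    have h1 : a ^^^ b = 2*((a/2) ^^^ (b/2)) + (a%2 ^^^ b%2) := by
      conv_lhs => rw [ea, eb]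
      exact bit_xor _ _ _ _ hx hy
    have h2 : a &&& b = 2*((a/2) &&& (b/2)) + (a%2 &&& b%2) := by
      conv_lhs => rw [ea, eb]
      exact bit_and _ _ _ _ hx hy
    have ihh := ih (a/2) (by omega) (b/2)
    have hb : a%2 + b%2 = (a%2 ^^^ b%2) + 2 * (a%2 &&& b%2) := by
      interval_cases h : (a%2) <;> interval_cases h2 : (b%2) <;> decide
    omega

lemma key_iff (u v w : ℕ) :
    ((u ^^^ v ^^^ w : ℕ) : ℤ) = -(u : ℤ) + (v : ℤ) + (w : ℤ) ↔
      u &&& (u ^^^ v ^^^ w) = v &&& w := by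
  have hx : u ^^^ (u ^^^ v ^^^ w) = v ^^^ w := by
    rw [Nat.xor_assoc, ← Nat.xor_assoc u u, Nat.xor_self, Nat.zero_xor]
  have e1 := add_eq_xor_add u (u ^^^ v ^^^ w)
  have e2 := add_eq_xor_add v w
  rw [hx] at e1
  omega

lemma bits_iff (u v w : ℕ) :
    u &&& (u ^^^ v ^^^ w) = v &&& w ↔
      ∀ i, (u.testBit i, v.testBit i, w.testBit i) ∈
        ({(false, false, false), (false, false, true), (false, true, false),
          (true, false, true), (true, true, false), (true, true, true)} :
          Set (Bool × Bool × Bool)) := by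
  constructor
  · intro h i
    have hb : (u &&& (u ^^^ v ^^^ w)).testBit i = (v &&& w).testBit i := by rw [h]
    simp only [Nat.testBit_and, Nat.testBit_xor] at hb
    revert hb
    cases u.testBit i <;> cases v.testBit i <;> cases w.testBit i <;> simp
  · intro h
    apply Nat.eq_of_testBit_eq
    intro i
    have := h i
    simp only [Nat.testBit_and, Nat.testBit_xor]
    revert this
    cases u.testBit i <;> cases v.testBit i <;> cases w.testBit i <;> simp

lemma bool_key (a b c : Bool) (u v w : ℕ) :
    (2*u + a.toNat) &&& ((2*u + a.toNat) ^^^ (2*v + b.toNat) ^^^ (2*w + c.toNat))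
        = (2*v + b.toNat) &&& (2*w + c.toNat) ↔
      (u &&& (u ^^^ v ^^^ w) = v &&& w) ∧
        (a.toNat &&& (a.toNat ^^^ b.toNat ^^^ c.toNat) = b.toNat &&& c.toNat) := by
  have ha : a.toNat < 2 := by cases a <;> decide
  have hb : b.toNat < 2 := by cases b <;> decide
  have hc : c.toNat < 2 := by cases c <;> decide
  have hab : a.toNat ^^^ b.toNat < 2 := by cases a <;> cases b <;> decide
  have habc : a.toNat ^^^ b.toNat ^^^ c.toNat < 2 := by cases a <;> cases b <;> cases c <;> decide
  have hand : a.toNat &&& (a.toNat ^^^ b.toNat ^^^ c.toNat) < 2 := by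
    cases a <;> cases b <;> cases c <;> decide
  have hand2 : b.toNat &&& c.toNat < 2 := by cases b <;> cases c <;> decide
  rw [bit_xor _ _ _ _ ha hb, bit_xor _ _ _ _ hab hc, bit_and _ _ _ _ ha habc,
    bit_and _ _ _ _ hb hc]
  omega

lemma count_lemma : ∀ n : ℕ,
    ((Finset.range (2 ^ n) ×ˢ Finset.range (2 ^ n) ×ˢ Finset.range (2 ^ n)).filter
      (fun t : ℕ × ℕ × ℕ => t.1 &&& (t.1 ^^^ t.2.1 ^^^ t.2.2) = t.2.1 &&& t.2.2)).card
      = 6 ^ n := by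
  intro n
  induction n with
  | zero => decide
  | succ n ih =>
    set A : Finset (Bool × Bool × Bool) :=
      {(false, false, false), (false, false, true), (false, true, false),
        (true, false, true), (true, true, false), (true, true, true)} with hA
    have hmem : ∀ a b c : Bool, (a, b, c) ∈ A ↔
        a.toNat &&& (a.toNat ^^^ b.toNat ^^^ c.toNat) = b.toNat &&& c.toNat := by
      intro a b c; cases a <;> cases b <;> cases c <;> simp [hA]
    have hpow : 2 ^ (n+1) = 2 * 2 ^ n := by ring
    have hcard : ((Finset.range (2 ^ (n+1)) ×ˢ Finset.range (2 ^ (n+1)) ×ˢ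
          Finset.range (2 ^ (n+1))).filter
        (fun t : ℕ × ℕ × ℕ => t.1 &&& (t.1 ^^^ t.2.1 ^^^ t.2.2) = t.2.1 &&& t.2.2)).card
        = (A ×ˢ ((Finset.range (2 ^ n) ×ˢ Finset.range (2 ^ n) ×ˢ Finset.range (2 ^ n)).filter
            (fun t : ℕ × ℕ × ℕ => t.1 &&& (t.1 ^^^ t.2.1 ^^^ t.2.2) = t.2.1 &&& t.2.2))).card := by
      apply Finset.card_nbij'
        (i := fun t => ((t.1.testBit 0, t.2.1.testBit 0, t.2.2.testBit 0),
          (t.1 / 2, t.2.1 / 2, t.2.2 / 2)))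
        (j := fun p => (2 * p.2.1 + p.1.1.toNat, 2 * p.2.2.1 + p.1.2.1.toNat,
          2 * p.2.2.2 + p.1.2.2.toNat))
      · rintro ⟨u, v, w⟩ ht
        simp only [Finset.mem_coe, Finset.mem_filter, Finset.mem_product, Finset.mem_range] at ht ⊢
        obtain ⟨⟨hu, hv, hw⟩, hP⟩ := ht
        have eu : u = 2 * (u / 2) + (u.testBit 0).toNat := by
          simp only [Nat.testBit_zero]
          rcases Nat.mod_two_eq_zero_or_one u with h | h <;> simp [h] <;> omega
        have ev : v = 2 * (v / 2) + (v.testBit 0).toNat := by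
          simp only [Nat.testBit_zero]
          rcases Nat.mod_two_eq_zero_or_one v with h | h <;> simp [h] <;> omega
        have ew : w = 2 * (w / 2) + (w.testBit 0).toNat := by
          simp only [Nat.testBit_zero]
          rcases Nat.mod_two_eq_zero_or_one w with h | h <;> simp [h] <;> omega
        rw [eu, ev, ew, bool_key] at hP
        refine ⟨(hmem _ _ _).2 hP.2, ⟨by omega, by omega, by omega⟩, hP.1⟩
      · rintro ⟨⟨a, b, c⟩, u, v, w⟩ ht
        simp only [Finset.mem_coe, Finset.mem_filter, Finset.mem_product, Finset.mem_range] at ht ⊢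
        obtain ⟨hA', ⟨hu, hv, hw⟩, hP⟩ := ht
        have ha : a.toNat < 2 := by cases a <;> decide
        have hbb : b.toNat < 2 := by cases b <;> decide
        have hcc : c.toNat < 2 := by cases c <;> decide
        refine ⟨⟨by omega, by omega, by omega⟩, ?_⟩
        exact (bool_key a b c u v w).2 ⟨hP, (hmem _ _ _).1 hA'⟩
      · rintro ⟨u, v, w⟩ _
        have : ∀ m : ℕ, 2 * (m / 2) + (m.testBit 0).toNat = m := by
          intro m
          simp only [Nat.testBit_zero]
          rcases Nat.mod_two_eq_zero_or_one m with h | h <;> simp [h] <;> omega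
        simp only [Prod.mk.injEq]
        exact ⟨this u, this v, this w⟩
      · rintro ⟨⟨a, b, c⟩, u, v, w⟩ _
        have hd : ∀ (x : Bool) (m : ℕ), (2 * m + x.toNat) / 2 = m := by
          intro x m; cases x <;> simp <;> omega
        have hb : ∀ (x : Bool) (m : ℕ), (2 * m + x.toNat).testBit 0 = x := by
          intro x m
          simp only [Nat.testBit_zero]
          cases x <;> simp <;> omega
        simp only [Prod.mk.injEq]
        exact ⟨⟨hb a u, hb b v, hb c w⟩, hd a u, hd b v, hd c w⟩
    rw [hcard, Finset.card_product, ih]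
    have : A.card = 6 := by decide
    rw [this]; ring

/-- For `n`-bit integers `u, v, w`, the equality `u ^^^ v ^^^ w = -u + v + w` (in `ℤ`)
holds iff for each `i < n` the bit triple `(u_i, v_i, w_i)` is one of
`(0,0,0), (0,0,1), (0,1,0), (1,0,1), (1,1,0), (1,1,1)`; there are `6^n` such triples. -/
theorem xor_three_eq_neg_add_add_iff_and_card (n : ℕ) :
    (∀ u v w : ℕ, u < 2 ^ n → v < 2 ^ n → w < 2 ^ n →
      (((u ^^^ v ^^^ w : ℕ) : ℤ) = -(u : ℤ) + (v : ℤ) + (w : ℤ) ↔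
        ∀ i < n, (u.testBit i, v.testBit i, w.testBit i) ∈
          ({(false, false, false), (false, false, true), (false, true, false),
            (true, false, true), (true, true, false), (true, true, true)} :
            Set (Bool × Bool × Bool)))) ∧
    ((Finset.range (2 ^ n) ×ˢ Finset.range (2 ^ n) ×ˢ Finset.range (2 ^ n)).filter
      (fun t : ℕ × ℕ × ℕ =>
        ((t.1 ^^^ t.2.1 ^^^ t.2.2 : ℕ) : ℤ) = -(t.1 : ℤ) + (t.2.1 : ℤ) + (t.2.2 : ℤ))).card
      = 6 ^ n := by
  constructor
  · intro u v w hu hv hw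
    rw [key_iff, bits_iff]
    constructor
    · exact fun h i _ => h i
    · intro h i
      by_cases hi : i < n
      · exact h i hi
      · have hb : ∀ m : ℕ, m < 2 ^ n → m.testBit i = false := fun m hm =>
          Nat.testBit_lt_two_pow
            (lt_of_lt_of_le hm (Nat.pow_le_pow_right (by norm_num) (le_of_not_gt hi)))
        rw [hb u hu, hb v hv, hb w hw]
        simp
  · rw [Finset.filter_congr (fun t _ => key_iff t.1 t.2.1 t.2.2)]
    exact count_lemma n
end

section
/- Let n ≥ 1 be a natural number. The number of quadruples (u, v, w, s) of n-bit integers such that, setting t := u ⊕ v ⊕ w, both congruences u ⊕ v ⊕ w ≡ −u + v + w (mod 2^n) and w ⊕ s ⊕ t ≡ −w + s + t (mod 2^n) hold (congruences in the integers), equals 16 · 10^(n−1). Equivalently, for independent uniformly random n-bit integers u, v, w, s, both events hold with probability (5/8)^(n−1). -/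
/-- Addition as xor plus twice the and. -/
lemma nat_add_eq_xor (a b : ℕ) : a + b = (a ^^^ b) + 2 * (a &&& b) := by
  induction a using Nat.binaryRec generalizing b with
  | zero => simp
  | bit i x ih =>
    induction b using Nat.binaryRec with
    | zero => simp
    | bit j y _ =>
      rw [Nat.xor_bit, Nat.land_bit, Nat.bit_val, Nat.bit_val, Nat.bit_val, Nat.bit_val]
      have h := ih y
      cases i <;> cases j <;> simp [Bool.toNat] <;> omega

lemma nat_xor_cancel_left (a b c : ℕ) : (a ^^^ b ^^^ c) ^^^ a = b ^^^ c := by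
  apply Nat.eq_of_testBit_eq
  intro k
  simp only [Nat.testBit_xor]
  cases a.testBit k <;> cases b.testBit k <;> cases c.testBit k <;> rfl

/-- The key integer identity. -/
lemma key_diff (a b c : ℕ) :
    (-(a:ℤ) + b + c) - ((a ^^^ b ^^^ c : ℕ) : ℤ)
      = 2 * (((b &&& c : ℕ) : ℤ) - (((a ^^^ b ^^^ c) &&& a : ℕ) : ℤ)) := by
  have h1 : ((b:ℤ) + c) = ((b ^^^ c : ℕ) : ℤ) + 2 * ((b &&& c : ℕ) : ℤ) := by
    exact_mod_cast congrArg (Nat.cast : ℕ → ℤ) (nat_add_eq_xor b c)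
  have h2 : (((a ^^^ b ^^^ c : ℕ) : ℤ) + a)
      = ((b ^^^ c : ℕ) : ℤ) + 2 * (((a ^^^ b ^^^ c) &&& a : ℕ) : ℤ) := by
    have h := nat_add_eq_xor (a ^^^ b ^^^ c) a
    rw [nat_xor_cancel_left] at h
    exact_mod_cast congrArg (Nat.cast : ℕ → ℤ) h
  linarith

lemma modeq_two_pow_iff_testBit (k x y : ℕ) :
    x ≡ y [MOD 2 ^ k] ↔ ∀ i < k, x.testBit i = y.testBit i := by
  constructor
  · intro h i hi
    have := congrArg (fun z => Nat.testBit z i) h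
    simpa [Nat.testBit_mod_two_pow, hi] using this
  · intro h
    show x % 2 ^ k = y % 2 ^ k
    apply Nat.eq_of_testBit_eq
    intro i
    simp only [Nat.testBit_mod_two_pow]
    by_cases hik : i < k
    · simp [hik, h i hik]
    · simp [hik]

/-- Characterization of the congruence condition in terms of bits. -/
lemma cond_iff_bits (n : ℕ) (hn : 1 ≤ n) (a b c : ℕ) :
    (((a ^^^ b ^^^ c : ℕ) : ℤ) ≡ -(a : ℤ) + (b : ℤ) + (c : ℤ) [ZMOD (2 ^ n : ℕ)]) ↔
      ∀ i < n - 1, (b &&& c).testBit i = ((a ^^^ b ^^^ c) &&& a).testBit i := by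
  obtain ⟨m, rfl⟩ : ∃ m, n = m + 1 := ⟨n - 1, (Nat.succ_pred_eq_of_pos hn).symm⟩
  have hcast : ((2 ^ (m + 1) : ℕ) : ℤ) = 2 * ((2 ^ m : ℕ) : ℤ) := by push_cast; ring
  rw [Int.modEq_iff_dvd, key_diff, hcast,
    mul_dvd_mul_iff_left (two_ne_zero : (2:ℤ) ≠ 0), ← Nat.modEq_iff_dvd,
    modeq_two_pow_iff_testBit]
  simp only [Nat.add_sub_cancel]
  exact ⟨fun h i hi => (h i hi).symm, fun h i hi => (h i hi).symm⟩


/-- Build a natural number from its low `n` bits. -/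
def ofFn : {n : ℕ} → (Fin n → Bool) → ℕ
  | 0, _ => 0
  | _ + 1, g => Nat.bit (g 0) (ofFn fun i => g i.succ)

lemma ofFn_lt : ∀ {n} (g : Fin n → Bool), ofFn g < 2 ^ n
  | 0, _ => by simp [ofFn]
  | n + 1, g => by
    rw [ofFn]
    exact Nat.bit_lt_two_pow_succ_iff.2 (ofFn_lt _)

lemma testBit_ofFn : ∀ {n} (g : Fin n → Bool) (i : Fin n), (ofFn g).testBit i = g i
  | n + 1, g, i => by
    refine Fin.cases ?_ (fun j => ?_) i
    · simpa [ofFn] using Nat.testBit_bit_zero _ _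
    · rw [ofFn]
      show (Nat.bit (g 0) (ofFn fun k => g k.succ)).testBit (j.val.succ) = _
      rw [Nat.testBit_bit_succ]
      exact testBit_ofFn _ j

lemma ofFn_testBit {n} {x : ℕ} (hx : x < 2 ^ n) :
    ofFn (fun i : Fin n => x.testBit i) = x := by
  apply Nat.eq_of_testBit_eq
  intro i
  by_cases h : i < n
  · exact testBit_ofFn _ ⟨i, h⟩
  · rw [Nat.testBit_eq_false_of_lt
      (lt_of_lt_of_le (ofFn_lt _) (Nat.pow_le_pow_right (by norm_num) (le_of_not_gt h))),
      Nat.testBit_eq_false_of_lt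
      (lt_of_lt_of_le hx (Nat.pow_le_pow_right (by norm_num) (le_of_not_gt h)))]

/-- The per-bit predicate. -/
def Pbit (x : Bool × Bool × Bool × Bool) : Prop :=
  ((x.2.1 && x.2.2.1) = (((x.1 != x.2.1) != x.2.2.1) && x.1)) ∧
  ((x.2.2.2 && ((x.1 != x.2.1) != x.2.2.1)) =
    (((x.2.2.1 != x.2.2.2) != ((x.1 != x.2.1) != x.2.2.1)) && x.2.2.1))

instance : DecidablePred Pbit := fun x => instDecidableAnd

example : (Finset.univ.filter Pbit).card = 10 := by decide


lemma quad_iff (n : ℕ) (hn : 1 ≤ n) (u v w s : ℕ) :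
    ((((u ^^^ v ^^^ w : ℕ) : ℤ) ≡ -(u : ℤ) + (v : ℤ) + (w : ℤ) [ZMOD (2 ^ n : ℕ)]) ∧
     (((w ^^^ s ^^^ (u ^^^ v ^^^ w) : ℕ) : ℤ) ≡
        -(w : ℤ) + (s : ℤ) + ((u ^^^ v ^^^ w : ℕ) : ℤ) [ZMOD (2 ^ n : ℕ)])) ↔
      ∀ i : Fin n, i.val < n - 1 →
        Pbit (u.testBit i, v.testBit i, w.testBit i, s.testBit i) := by
  rw [cond_iff_bits n hn u v w, cond_iff_bits n hn w s (u ^^^ v ^^^ w)]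
  constructor
  · rintro ⟨h1, h2⟩ i hi
    have g1 := h1 i hi
    have g2 := h2 i hi
    simp only [Nat.testBit_land, Nat.testBit_xor] at g1 g2
    exact ⟨g1, g2⟩
  · intro h
    constructor <;> intro i hi <;>
      [have := (h ⟨i, lt_of_lt_of_le hi (Nat.sub_le n 1)⟩ hi).1;
       have := (h ⟨i, lt_of_lt_of_le hi (Nat.sub_le n 1)⟩ hi).2] <;>
      simp only [Nat.testBit_land, Nat.testBit_xor] <;> exact this

open scoped Classical in
/-- For `n ≥ 1`, the number of quadruples `(u, v, w, s)` of `n`-bit integers such that,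
with `t := u ^^^ v ^^^ w`, both `u ^^^ v ^^^ w ≡ -u + v + w [ZMOD 2^n]` and
`w ^^^ s ^^^ t ≡ -w + s + t [ZMOD 2^n]` hold, is `16 * 10^(n-1)`; equivalently, the
probability over uniform quadruples is `(5/8)^(n-1)`. -/
theorem card_quadruples_neg_add_add (n : ℕ) (hn : 1 ≤ n) :
    let N := ((Finset.range (2 ^ n) ×ˢ Finset.range (2 ^ n) ×ˢ
        Finset.range (2 ^ n) ×ˢ Finset.range (2 ^ n)).filter
      (fun a : ℕ × ℕ × ℕ × ℕ =>
        let u := a.1; let v := a.2.1; let w := a.2.2.1; let s := a.2.2.2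
        let t := u ^^^ v ^^^ w
        (((u ^^^ v ^^^ w : ℕ) : ℤ) ≡ -(u : ℤ) + (v : ℤ) + (w : ℤ) [ZMOD (2 ^ n : ℕ)]) ∧
        (((w ^^^ s ^^^ t : ℕ) : ℤ) ≡ -(w : ℤ) + (s : ℤ) + (t : ℤ) [ZMOD (2 ^ n : ℕ)]))).card
    N = 16 * 10 ^ (n - 1) ∧ (N : ℚ) / (16 : ℚ) ^ n = ((5 : ℚ) / 8) ^ (n - 1) := by
  intro N
  have hcard : N = 16 * 10 ^ (n - 1) := by
    have key : N = (Fintype.piFinset (fun i : Fin n =>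
        Finset.univ.filter (fun x : Bool × Bool × Bool × Bool =>
          i.val < n - 1 → Pbit x))).card := by
      refine Finset.card_bij'
        (fun a _ => fun i : Fin n =>
          (a.1.testBit i, a.2.1.testBit i, a.2.2.1.testBit i, a.2.2.2.testBit i))
        (fun g _ => (ofFn fun i => (g i).1, ofFn fun i => (g i).2.1,
          ofFn fun i => (g i).2.2.1, ofFn fun i => (g i).2.2.2)) ?_ ?_ ?_ ?_
      · rintro ⟨u, v, w, s⟩ ha
        simp only [Finset.mem_filter, Finset.mem_product, Finset.mem_range] at ha
        rw [Fintype.mem_piFinset]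
        intro i
        simp only [Finset.mem_filter, Finset.mem_univ, true_and]
        intro hi
        exact ((quad_iff n hn u v w s).1 ha.2) i hi
      · intro g hg
        simp only [Fintype.mem_piFinset, Finset.mem_filter, Finset.mem_univ, true_and] at hg
        simp only [Finset.mem_filter, Finset.mem_product, Finset.mem_range]
        refine ⟨⟨ofFn_lt _, ofFn_lt _, ofFn_lt _, ofFn_lt _⟩, ?_⟩
        refine (quad_iff n hn _ _ _ _).2 ?_
        intro i hi
        simp only [testBit_ofFn]
        exact hg i hi
      · rintro ⟨u, v, w, s⟩ ha
        simp only [Finset.mem_filter, Finset.mem_product, Finset.mem_range] at ha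
        obtain ⟨⟨hu, hv, hw, hs⟩, -⟩ := ha
        show (ofFn _, ofFn _, ofFn _, ofFn _) = (u, v, w, s)
        rw [show (ofFn fun i : Fin n => u.testBit i) = u from ofFn_testBit hu,
          show (ofFn fun i : Fin n => v.testBit i) = v from ofFn_testBit hv,
          show (ofFn fun i : Fin n => w.testBit i) = w from ofFn_testBit hw,
          show (ofFn fun i : Fin n => s.testBit i) = s from ofFn_testBit hs]
      · intro g hg
        funext i
        simp only [testBit_ofFn]
    rw [key, Fintype.card_piFinset]
    obtain ⟨m, rfl⟩ : ∃ m, n = m + 1 := ⟨n - 1, (Nat.succ_pred_eq_of_pos hn).symm⟩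
    rw [Fin.prod_univ_castSucc]
    have h1 : ∀ i : Fin m,
        (Finset.univ.filter (fun x : Bool × Bool × Bool × Bool =>
          (Fin.castSucc i).val < m + 1 - 1 → Pbit x)).card = 10 := by
      intro i
      have hi : (Fin.castSucc i).val < m + 1 - 1 := by simpa using i.isLt
      rw [show (Finset.univ.filter (fun x : Bool × Bool × Bool × Bool =>
          (Fin.castSucc i).val < m + 1 - 1 → Pbit x)) = Finset.univ.filter Pbit from
        Finset.filter_congr (fun x _ => by simp [hi])]
      decide
    have h2 : (Finset.univ.filter (fun x : Bool × Bool × Bool × Bool =>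
        (Fin.last m).val < m + 1 - 1 → Pbit x)).card = 16 := by
      have h : ¬ ((Fin.last m).val < m + 1 - 1) := by simp
      rw [Finset.filter_true_of_mem (fun x _ hlt => absurd hlt h)]
      decide
    rw [Finset.prod_congr rfl (fun i _ => h1 i), h2, Finset.prod_const]
    simp [mul_comm]
  refine ⟨hcard, ?_⟩
  rw [hcard]
  obtain ⟨m, rfl⟩ : ∃ m, n = m + 1 := ⟨n - 1, (Nat.succ_pred_eq_of_pos hn).symm⟩
  simp only [Nat.add_sub_cancel]
  have h58 : ((5 : ℚ) / 8) = 10 / 16 := by norm_num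
  rw [h58, div_pow, pow_succ]
  push_cast
  rw [div_eq_div_iff (by positivity) (by positivity)]
  ring
end

section
/- Let n ≥ 1 be a natural number. The number of quadruples (u, v, w, s) of n-bit integers such that, setting t := u ⊕ v ⊕ w, both congruences u ⊕ v ⊕ w ≡ u − v + w (mod 2^n) and w ⊕ s ⊕ t ≡ w − s + t (mod 2^n) hold (congruences in the integers), equals 16 · 8^(n−1). Equivalently, for independent uniformly random n-bit integers u, v, w, s, both events hold with probability (1/2)^(n−1). -/
namespace CardQuadAux

lemma add_xor_and (x : ℕ) : ∀ y : ℕ, x + y = (x ^^^ y) + 2 * (x &&& y) := by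
  induction x using Nat.binaryRec with
  | zero => intro y; simp
  | bit b m IH =>
    intro y
    rw [← Nat.bit_testBit_zero_shiftRight_one y]
    rw [Nat.xor_bit, Nat.land_bit]
    have h := IH (y >>> 1)
    cases b <;> cases y.testBit 0 <;>
      simp only [Nat.bit_val, Bool.toNat, Bool.bne_true, Bool.bne_false,
        Bool.not_true, Bool.not_false, Bool.and_true, Bool.and_false,
        Bool.true_and, Bool.false_and, cond_true, cond_false] <;> omega

lemma disj (x y z : ℕ) : (x &&& y) &&& ((x ^^^ y) &&& z) = 0 := by
  apply Nat.zero_of_testBit_eq_false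
  intro i
  simp only [Nat.testBit_and, Nat.testBit_xor]
  cases x.testBit i <;> cases y.testBit i <;> simp

lemma sum3 (x y z : ℕ) :
    x + y + z = (x ^^^ y ^^^ z) + 2 * ((x &&& y) + ((x ^^^ y) &&& z)) := by
  have h1 := add_xor_and x y
  have h2 := add_xor_and (x ^^^ y) z
  omega

lemma M_eq (x y z : ℕ) :
    (x &&& y) + ((x ^^^ y) &&& z) = (x &&& y) ^^^ ((x ^^^ y) &&& z) := by
  have h := add_xor_and (x &&& y) ((x ^^^ y) &&& z)
  rw [disj] at h
  omega

lemma mod_eq_iff (K a b : ℕ) :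
    a % 2 ^ K = b % 2 ^ K ↔ ∀ i < K, a.testBit i = b.testBit i := by
  constructor
  · intro h i hi
    have := congrArg (fun t => Nat.testBit t i) h
    simpa [Nat.testBit_mod_two_pow, hi] using this
  · intro h
    apply Nat.eq_of_testBit_eq
    intro i
    simp only [Nat.testBit_mod_two_pow]
    by_cases hi : i < K
    · simp [hi, h i hi]
    · simp [hi]

lemma cong_iff {N : ℕ} (hN : 1 ≤ N) (x y z : ℕ) :
    (((x ^^^ y ^^^ z : ℕ) : ℤ) ≡ (x : ℤ) - y + z [ZMOD (2 ^ N : ℕ)]) ↔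
      ∀ i < N - 1, ¬(x.testBit i ≠ y.testBit i ∧ z.testBit i ≠ y.testBit i) := by
  set M : ℕ := (x &&& y) + ((x ^^^ y) &&& z) with hM
  have hsum : ((x ^^^ y ^^^ z : ℕ) : ℤ) = (x : ℤ) + y + z - 2 * M := by
    have := sum3 x y z
    omega
  have hdiff : (x : ℤ) - ↑y + ↑z - ((x ^^^ y ^^^ z : ℕ) : ℤ) = 2 * ((M : ℤ) - ↑y) := by
    rw [hsum]; ring
  have hcast : ((2 ^ N : ℕ) : ℤ) = 2 * 2 ^ (N - 1) := by
    have hN' : N = (N - 1) + 1 := by omega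
    rw [hN']
    push_cast
    ring
  have hcast2 : ((2 : ℤ) ^ (N - 1)) = ((2 ^ (N - 1) : ℕ) : ℤ) := by push_cast; ring
  rw [Int.modEq_iff_dvd, hdiff, hcast, mul_dvd_mul_iff_left (two_ne_zero), hcast2,
    ← Nat.modEq_iff_dvd]
  show y % 2 ^ (N - 1) = M % 2 ^ (N - 1) ↔ _
  rw [mod_eq_iff]
  have tauto : ∀ a b c : Bool,
      (b = ((a && b) ^^ ((a ^^ b) && c))) ↔ ¬(a ≠ b ∧ c ≠ b) := by decide
  apply forall_congr'
  intro i
  apply imp_congr_right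
  intro _
  rw [hM, M_eq]
  simp only [Nat.testBit_xor, Nat.testBit_and]
  exact tauto _ _ _

/-- the per-bit predicate -/
def Qb (a b c d : Bool) : Bool :=
  (!((a != b) && (c != b))) && (!((c != d) && (((a ^^ b) ^^ c) != d)))

lemma Qb_iff (a b c d : Bool) : Qb a b c d = true ↔
    (¬(a ≠ b ∧ c ≠ b)) ∧ (¬(c ≠ d ∧ ((a ^^ b) ^^ c) ≠ d)) := by
  revert a b c d; decide

def good (m : ℕ) (p : ℕ × ℕ × ℕ × ℕ) : Prop :=
  ∀ i < m, Qb (p.1.testBit i) (p.2.1.testBit i) (p.2.2.1.testBit i) (p.2.2.2.testBit i) = true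

instance (m : ℕ) : DecidablePred (good m) := fun _ => Nat.decidableBallLT m _

def R (k : ℕ) : Finset (ℕ × ℕ × ℕ × ℕ) :=
  Finset.range (2 ^ k) ×ˢ Finset.range (2 ^ k) ×ˢ Finset.range (2 ^ k) ×ˢ Finset.range (2 ^ k)

def cnt (k m : ℕ) : ℕ := ((R k).filter (good m)).card

def S1 : Finset (ℕ × ℕ × ℕ × ℕ) :=
  (Finset.range 2 ×ˢ Finset.range 2 ×ˢ Finset.range 2 ×ˢ Finset.range 2).filter
    (fun b => Qb (b.1.testBit 0) (b.2.1.testBit 0) (b.2.2.1.testBit 0) (b.2.2.2.testBit 0) = true)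

lemma S1_card : S1.card = 8 := by decide

lemma tb0 (u : ℕ) : (u % 2).testBit 0 = u.testBit 0 := by
  simp only [Nat.testBit_zero, Nat.mod_mod_of_dvd u (dvd_refl 2)]

lemma good_succ (m : ℕ) (u v w s : ℕ) :
    good (m + 1) (u, v, w, s) ↔
      Qb (u.testBit 0) (v.testBit 0) (w.testBit 0) (s.testBit 0) = true ∧
        good m (u / 2, v / 2, w / 2, s / 2) := by
  constructor
  · intro h
    refine ⟨h 0 (Nat.succ_pos m), fun i hi => ?_⟩
    simpa [good, Nat.testBit_div_two] using h (i + 1) (by omega)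
  · rintro ⟨h0, h⟩ i hi
    cases i with
    | zero => exact h0
    | succ j =>
      have := h j (by omega)
      simpa [good, Nat.testBit_div_two] using this

lemma cnt_zero (k : ℕ) : cnt k 0 = 16 ^ k := by
  have : (R k).filter (good 0) = R k := by
    apply Finset.filter_true_of_mem
    intro x _ i hi
    omega
  rw [cnt, this, R]
  simp only [Finset.card_product, Finset.card_range]
  rw [show (16 : ℕ) = 2 ^ 4 by norm_num, ← pow_mul]
  rw [show 2 ^ k * (2 ^ k * (2 ^ k * 2 ^ k)) = 2 ^ (k + (k + (k + k))) by simp [pow_add]]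
  congr 1
  omega

lemma cnt_succ (k m : ℕ) : cnt (k + 1) (m + 1) = 8 * cnt k m := by
  have key : ((R (k + 1)).filter (good (m + 1))).card =
      (S1 ×ˢ ((R k).filter (good m))).card := by
    apply Finset.card_nbij'
      (i := fun q => ((q.1 % 2, q.2.1 % 2, q.2.2.1 % 2, q.2.2.2 % 2),
        (q.1 / 2, q.2.1 / 2, q.2.2.1 / 2, q.2.2.2 / 2)))
      (j := fun p => (2 * p.2.1 + p.1.1, 2 * p.2.2.1 + p.1.2.1,
        2 * p.2.2.2.1 + p.1.2.2.1, 2 * p.2.2.2.2 + p.1.2.2.2))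
    · rintro ⟨u, v, w, s⟩ (hq : _ ∈ (_ : Finset _))
      show _ ∈ (_ : Finset _)
      simp only [R, S1, Finset.mem_product, Finset.mem_filter, Finset.mem_range] at hq ⊢
      obtain ⟨⟨hu, hv, hw, hs⟩, hg⟩ := hq
      have hp : (2 : ℕ) ^ (k + 1) = 2 * 2 ^ k := by rw [pow_succ]; ring
      rw [good_succ] at hg
      refine ⟨⟨⟨by omega, by omega, by omega, by omega⟩, ?_⟩, ⟨by omega, by omega, by omega, by omega⟩, hg.2⟩
      simpa only [tb0] using hg.1
    · rintro ⟨⟨a, b, c, d⟩, ⟨u, v, w, s⟩⟩ (hp : _ ∈ (_ : Finset _))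
      show _ ∈ (_ : Finset _)
      simp only [R, S1, Finset.mem_product, Finset.mem_filter, Finset.mem_range] at hp ⊢
      obtain ⟨⟨⟨ha, hb, hc, hd⟩, hq⟩, ⟨hu, hv, hw, hs⟩, hg⟩ := hp
      have hpow : (2 : ℕ) ^ (k + 1) = 2 * 2 ^ k := by rw [pow_succ]; ring
      refine ⟨⟨by omega, by omega, by omega, by omega⟩, ?_⟩
      rw [good_succ]
      constructor
      · have e1 : (2 * u + a).testBit 0 = a.testBit 0 := by
          have h : (2 * u + a) % 2 = a % 2 := by omega
          rw [Nat.testBit_zero, Nat.testBit_zero, h]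
        have e2 : (2 * v + b).testBit 0 = b.testBit 0 := by
          have h : (2 * v + b) % 2 = b % 2 := by omega
          rw [Nat.testBit_zero, Nat.testBit_zero, h]
        have e3 : (2 * w + c).testBit 0 = c.testBit 0 := by
          have h : (2 * w + c) % 2 = c % 2 := by omega
          rw [Nat.testBit_zero, Nat.testBit_zero, h]
        have e4 : (2 * s + d).testBit 0 = d.testBit 0 := by
          have h : (2 * s + d) % 2 = d % 2 := by omega
          rw [Nat.testBit_zero, Nat.testBit_zero, h]
        rw [e1, e2, e3, e4]
        exact hq
      · have e1 : (2 * u + a) / 2 = u := by omega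
        have e2 : (2 * v + b) / 2 = v := by omega
        have e3 : (2 * w + c) / 2 = w := by omega
        have e4 : (2 * s + d) / 2 = s := by omega
        rw [e1, e2, e3, e4]
        exact hg
    · rintro ⟨u, v, w, s⟩ _
      simp only [Prod.mk.injEq]
      omega
    · rintro ⟨⟨a, b, c, d⟩, ⟨u, v, w, s⟩⟩ (hp : _ ∈ (_ : Finset _))
      simp only [R, S1, Finset.mem_product, Finset.mem_filter, Finset.mem_range] at hp
      obtain ⟨⟨⟨ha, hb, hc, hd⟩, _⟩, _⟩ := hp
      simp only [Prod.mk.injEq]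
      omega
  rw [cnt, key, Finset.card_product, S1_card, cnt]

lemma cnt_main (m : ℕ) : cnt (m + 1) m = 16 * 8 ^ m := by
  induction m with
  | zero => rw [cnt_zero]; norm_num
  | succ m IH => rw [cnt_succ, IH]; ring

end CardQuadAux

open CardQuadAux in
open scoped Classical in
/-- For `n ≥ 1`, the number of quadruples `(u, v, w, s)` of `n`-bit integers such that,
with `t := u ^^^ v ^^^ w`, both `u ^^^ v ^^^ w ≡ u - v + w [ZMOD 2^n]` and
`w ^^^ s ^^^ t ≡ w - s + t [ZMOD 2^n]` hold, is `16 * 8^(n-1)`; equivalently, the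
probability over uniform quadruples is `(1/2)^(n-1)`. -/
theorem card_quadruples_add_neg_add (n : ℕ) (hn : 1 ≤ n) :
    let N := ((Finset.range (2 ^ n) ×ˢ Finset.range (2 ^ n) ×ˢ
        Finset.range (2 ^ n) ×ˢ Finset.range (2 ^ n)).filter
      (fun a : ℕ × ℕ × ℕ × ℕ =>
        let u := a.1; let v := a.2.1; let w := a.2.2.1; let s := a.2.2.2
        let t := u ^^^ v ^^^ w
        (((u ^^^ v ^^^ w : ℕ) : ℤ) ≡ (u : ℤ) - (v : ℤ) + (w : ℤ) [ZMOD (2 ^ n : ℕ)]) ∧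
        (((w ^^^ s ^^^ t : ℕ) : ℤ) ≡ (w : ℤ) - (s : ℤ) + (t : ℤ) [ZMOD (2 ^ n : ℕ)]))).card
    N = 16 * 8 ^ (n - 1) ∧ (N : ℚ) / (16 : ℚ) ^ n = ((1 : ℚ) / 2) ^ (n - 1) := by
  intro N
  have hNval : N = 16 * 8 ^ (n - 1) := by
    have hfc : N = cnt n (n - 1) := by
      rw [cnt]
      show Finset.card _ = Finset.card _
      congr 1
      apply Finset.filter_congr
      rintro ⟨u, v, w, s⟩ _
      show (_ ∧ _) ↔ good (n - 1) (u, v, w, s)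
      rw [cong_iff hn u v w, cong_iff hn w s (u ^^^ v ^^^ w)]
      constructor
      · rintro ⟨h1, h2⟩ i hi
        rw [Qb_iff]
        refine ⟨h1 i hi, ?_⟩
        have := h2 i hi
        simpa [Nat.testBit_xor] using this
      · intro h
        constructor
        · intro i hi
          exact ((Qb_iff _ _ _ _).mp (h i hi)).1
        · intro i hi
          have := ((Qb_iff _ _ _ _).mp (h i hi)).2
          simpa [Nat.testBit_xor] using this
    obtain ⟨m, rfl⟩ : ∃ m, n = m + 1 := ⟨n - 1, by omega⟩
    rw [hfc]
    simpa using cnt_main m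
  refine ⟨hNval, ?_⟩
  rw [hNval]
  obtain ⟨m, rfl⟩ : ∃ m, n = m + 1 := ⟨n - 1, by omega⟩
  simp only [Nat.add_sub_cancel]
  have h16 : (16 : ℚ) ^ (m + 1) = 16 * 8 ^ m * 2 ^ m := by
    rw [pow_succ, show (16 : ℚ) = 8 * 2 by norm_num, mul_pow]
    ring
  rw [h16, div_pow, one_pow]
  rw [div_eq_div_iff (by positivity) (by positivity)]
  push_cast
  ring
end

section
/- Let a, b, c be natural numbers with 1 ≤ a, b, c ≤ 63, let m = min(b, c), and let n ≤ m. Let (s_i) be a sequence of 64-bit words satisfying the xorshift128+ state recursion s_{i+2} = ((s_i ⊕ (s_i ≪ a)) ⊕ ((s_i ⊕ (s_i ≪ a)) ≫ b)) ⊕ (s_{i+1} ⊕ (s_{i+1} ≫ c)), and define o'_i := s_i ⊕ s_{i+1}. Then the sequence (o'_i) satisfies the same recursion, and for every i the n most significant bits of o'_{i+2} agree with the n most significant bits of (o'_i ⊕ (o'_i ≪ a)) ⊕ o'_{i+1}; that is, ⌊o'_{i+2} / 2^(64−n)⌋ = ⌊((o'_i ⊕ (o'_i ≪ a)) ⊕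 o'_{i+1}) / 2^(64−n)⌋. -/
lemma shr_xor (x y k : ℕ) : (x ^^^ y) >>> k = (x >>> k) ^^^ (y >>> k) := by
  apply Nat.eq_of_testBit_eq; intro i
  simp [Nat.testBit_xor, Nat.testBit_shiftRight]

lemma shl_mod_xor (x y a m : ℕ) :
    (2 ^ a * (x ^^^ y)) % 2 ^ m = (2 ^ a * x) % 2 ^ m ^^^ (2 ^ a * y) % 2 ^ m := by
  apply Nat.eq_of_testBit_eq; intro i
  have h : ∀ z : ℕ, 2 ^ a * z = z <<< a := fun z => by rw [Nat.shiftLeft_eq, Nat.mul_comm]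
  simp only [h, Nat.testBit_mod_two_pow, Nat.testBit_shiftLeft, Nat.testBit_xor]
  by_cases h1 : i < m <;> by_cases h2 : a ≤ i <;> simp [h1, h2, Bool.and_xor_distrib_left]

lemma xor_quad (p q r w : ℕ) : (p ^^^ q) ^^^ (r ^^^ w) = (p ^^^ r) ^^^ (q ^^^ w) := by
  rw [Nat.xor_assoc, Nat.xor_assoc, ← Nat.xor_assoc q, ← Nat.xor_assoc r,
    Nat.xor_comm q r]

lemma xor_div_of_lt {x y k : ℕ} (h : y < 2 ^ k) : (x ^^^ y) / 2 ^ k = x / 2 ^ k := by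
  have h1 := Nat.shiftRight_eq_div_pow y k
  rw [← Nat.shiftRight_eq_div_pow, ← Nat.shiftRight_eq_div_pow x, shr_xor, h1,
    Nat.div_eq_of_lt h, Nat.xor_zero]

lemma shr_lt {u m k n : ℕ} (hu : u < 2 ^ m) (hk : n ≤ k) (hm : k ≤ m) :
    u >>> k < 2 ^ (m - n) := by
  rw [Nat.shiftRight_eq_div_pow]
  have : u < 2 ^ k * 2 ^ (m - n) := by
    rw [← pow_add]
    exact hu.trans_le (pow_le_pow_right₀ one_le_two (by omega))
  exact Nat.div_lt_of_lt_mul this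

/-- If `(s_i)` is a sequence of 64-bit words satisfying the xorshift128+ state
recursion with parameters `a, b, c`, then `o'_i := s_i ^^^ s_{i+1}` satisfies the
same recursion, and the `n` most significant bits of `o'_{i+2}` (for `n ≤ min b c`)
agree with those of `(o'_i ^^^ (o'_i ≪ a)) ^^^ o'_{i+1}`. -/
theorem xorshift128plus_xor_output_recursion (a b c n : ℕ)
    (ha1 : 1 ≤ a) (ha2 : a ≤ 63) (hb1 : 1 ≤ b) (hb2 : b ≤ 63)
    (hc1 : 1 ≤ c) (hc2 : c ≤ 63) (hn : n ≤ min b c)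
    (s : ℕ → ℕ) (hs : ∀ i, s i < 2 ^ 64)
    (hrec : ∀ i, s (i + 2) =
      ((s i ^^^ ((2 ^ a * s i) % 2 ^ 64)) ^^^
          ((s i ^^^ ((2 ^ a * s i) % 2 ^ 64)) >>> b)) ^^^
        (s (i + 1) ^^^ (s (i + 1) >>> c))) :
    let o : ℕ → ℕ := fun i => s i ^^^ s (i + 1)
    (∀ i, o (i + 2) =
      ((o i ^^^ ((2 ^ a * o i) % 2 ^ 64)) ^^^
          ((o i ^^^ ((2 ^ a * o i) % 2 ^ 64)) >>> b)) ^^^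
        (o (i + 1) ^^^ (o (i + 1) >>> c))) ∧
    (∀ i, o (i + 2) / 2 ^ (64 - n) =
      ((o i ^^^ ((2 ^ a * o i) % 2 ^ 64)) ^^^ o (i + 1)) / 2 ^ (64 - n)) := by
  intro o
  set F : ℕ → ℕ := fun x => x ^^^ (2 ^ a * x) % 2 ^ 64 with hF
  set T : ℕ → ℕ := fun x => F x ^^^ (F x) >>> b with hT
  set G : ℕ → ℕ := fun x => x ^^^ x >>> c with hG
  have hFhom : ∀ x y, F (x ^^^ y) = F x ^^^ F y := by
    intro x y
    simp only [hF, shl_mod_xor]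
    exact xor_quad x y _ _
  have hThom : ∀ x y, T (x ^^^ y) = T x ^^^ T y := by
    intro x y
    simp only [hT, hFhom, shr_xor]
    exact xor_quad _ _ _ _
  have hGhom : ∀ x y, G (x ^^^ y) = G x ^^^ G y := by
    intro x y
    simp only [hG, shr_xor]
    exact xor_quad x y _ _
  have hrec2 : ∀ i, s (i + 2) = T (s i) ^^^ G (s (i + 1)) := hrec
  have hrec' : ∀ i, o (i + 2) = T (o i) ^^^ G (o (i + 1)) := by
    intro i
    show s (i + 2) ^^^ s (i + 3) = _
    rw [hrec2 i, show i + 3 = (i + 1) + 2 from rfl, hrec2 (i + 1)]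
    show _ = T (s i ^^^ s (i + 1)) ^^^ G (s (i + 1) ^^^ s (i + 2))
    rw [hThom, hGhom, xor_quad]
  refine ⟨hrec', fun i => ?_⟩
  have houtb : o (i + 2) = (F (o i) ^^^ o (i + 1)) ^^^
      ((F (o i)) >>> b ^^^ (o (i + 1)) >>> c) := by
    rw [hrec' i]; exact xor_quad _ _ _ _
  have hs' : ∀ j, o j < 2 ^ 64 := fun j => Nat.xor_lt_two_pow (hs j) (hs (j + 1))
  have hu64 : F (o i) < 2 ^ 64 :=
    Nat.xor_lt_two_pow (hs' i) (Nat.mod_lt _ (by positivity))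
  have hB : (F (o i)) >>> b ^^^ (o (i + 1)) >>> c < 2 ^ (64 - n) :=
    Nat.xor_lt_two_pow (shr_lt hu64 (le_trans hn (min_le_left _ _)) (by omega))
      (shr_lt (hs' (i + 1)) (le_trans hn (min_le_right _ _)) (by omega))
  rw [houtb, xor_div_of_lt hB]
end

section
/- Let a, b, c be natural numbers with 1 ≤ a, b, c ≤ 63 and let n be a natural number with 1 ≤ n ≤ min(b, c). Let s_i and s_{i+1} be 64-bit words and define s_{i+2} and s_{i+3} by the xorshift128+ state recursion s_{k+2} = ((s_k ⊕ (s_k ≪ a)) ⊕ ((s_k ⊕ (s_k ≪ a)) ≫ b)) ⊕ (s_{k+1} ⊕ (s_{k+1} ≫ c)). Define the outputs x = (s_i + s_{i+1}) mod 2^64, y = (s_{i+1} + s_{i+2}) mod 2^64, z = (s_{i+2} + s_{i+3}) mod 2^64. Let p, q, r ∈ {1, −1} with exactly two of them equal to 1, and assume the two congruences (in the integers, modulo 2^64): [s_{i+1}]_n ⊕ [s_i]_n ⊕ [s_i ≪ a]_n ≡ p·[s_{i+1}]_n + q·[s_i]_n + r·[s_i ≪ a]_n and [s_{i+2}]_n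 ⊕ [s_{i+1}]_n ⊕ [s_{i+1} ≪ a]_n ≡ p·[s_{i+2}]_n + q·[s_{i+1}]_n + r·[s_{i+1} ≪ a]_n. Then there exists an integer k such that |z − (q + r·2^a)·x − p·y − k·2^64| ≤ 4·(2^(64−n) − 1). -/
/-- `msbTrunc n u` is the 64-bit word `[u]_n` having the same `n` most significant
bits as `u` and zeroes in the remaining `64 - n` bits. -/
def msbTrunc (n u : ℕ) : ℕ := u - u % 2 ^ (64 - n)

/-- `lshift64 a u` is the left shift of `u` by `a` bits truncated to 64 bits. -/
def lshift64 (a u : ℕ) : ℕ := (2 ^ a * u) % 2 ^ 64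

/-- One step of the xorshift128+ state recursion with parameters `a, b, c`:
given the state `(s₀, s₁)`, it returns
`((s₀ ⊕ (s₀ ≪ a)) ⊕ ((s₀ ⊕ (s₀ ≪ a)) ≫ b)) ⊕ (s₁ ⊕ (s₁ ≫ c))`. -/
def xsStep (a b c s0 s1 : ℕ) : ℕ :=
  ((s0 ^^^ lshift64 a s0) ^^^ ((s0 ^^^ lshift64 a s0) >>> b)) ^^^ (s1 ^^^ (s1 >>> c))

lemma msb_eq_shift (n u : ℕ) : msbTrunc n u = (u >>> (64 - n)) <<< (64 - n) := by
  rw [msbTrunc, Nat.shiftRight_eq_div_pow, Nat.shiftLeft_eq]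
  rw [Nat.mul_comm]
  have := Nat.div_add_mod u (2 ^ (64 - n))
  omega

lemma msb_xor (n u v : ℕ) : msbTrunc n (u ^^^ v) = msbTrunc n u ^^^ msbTrunc n v := by
  simp only [msb_eq_shift]
  apply Nat.eq_of_testBit_eq
  intro i
  simp only [Nat.testBit_xor, Nat.testBit_shiftLeft, Nat.testBit_shiftRight]
  by_cases h : i ≥ 64 - n <;> simp [h]

lemma msb_shiftRight (n b u : ℕ) (hu : u < 2 ^ 64) (hnb : n ≤ b) :
    msbTrunc n (u >>> b) = 0 := by
  have h1 : u >>> b < 2 ^ (64 - n) := by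
    rw [Nat.shiftRight_eq_div_pow]
    apply Nat.div_lt_of_lt_mul
    calc u < 2 ^ 64 := hu
    _ ≤ 2 ^ b * 2 ^ (64 - n) := by
        rw [← pow_add]; exact Nat.pow_le_pow_right (by norm_num) (by omega)
  rw [msbTrunc, Nat.mod_eq_of_lt h1, Nat.sub_self]

lemma msb_xsStep (a b c n s0 s1 : ℕ) (hs0 : s0 < 2 ^ 64) (hs1 : s1 < 2 ^ 64)
    (hnb : n ≤ b) (hnc : n ≤ c) :
    msbTrunc n (xsStep a b c s0 s1) =
      msbTrunc n s1 ^^^ msbTrunc n s0 ^^^ msbTrunc n (lshift64 a s0) := by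
  have hL : lshift64 a s0 < 2 ^ 64 := Nat.mod_lt _ (by norm_num)
  have hA : s0 ^^^ lshift64 a s0 < 2 ^ 64 := Nat.xor_lt_two_pow hs0 hL
  rw [xsStep, msb_xor, msb_xor, msb_xor, msb_xor, msb_shiftRight n b _ hA hnb,
    msb_shiftRight n c _ hs1 hnc]
  simp only [Nat.xor_zero]
  ac_rfl

lemma xsStep_lt (a b c s0 s1 : ℕ) (hs0 : s0 < 2 ^ 64) (hs1 : s1 < 2 ^ 64) :
    xsStep a b c s0 s1 < 2 ^ 64 := by
  have hL : lshift64 a s0 < 2 ^ 64 := Nat.mod_lt _ (by norm_num)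
  have hA : s0 ^^^ lshift64 a s0 < 2 ^ 64 := Nat.xor_lt_two_pow hs0 hL
  have hB : (s0 ^^^ lshift64 a s0) >>> b < 2 ^ 64 :=
    lt_of_le_of_lt (by rw [Nat.shiftRight_eq_div_pow]; exact Nat.div_le_self _ _) hA
  have hC : s1 >>> c < 2 ^ 64 :=
    lt_of_le_of_lt (by rw [Nat.shiftRight_eq_div_pow]; exact Nat.div_le_self _ _) hs1
  exact Nat.xor_lt_two_pow (Nat.xor_lt_two_pow hA hB) (Nat.xor_lt_two_pow hs1 hC)

lemma msb_cast (n v : ℕ) :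
    ((msbTrunc n v : ℕ) : ℤ) = (v : ℤ) - ((v % 2 ^ (64 - n) : ℕ) : ℤ) := by
  rw [msbTrunc, Nat.cast_sub (Nat.mod_le _ _)]

/-- Under the sign conditions (two of `p, q, r` equal `1`, the other `-1`) and the two
modular equalities approximating xor by a signed sum on the top `n` bits, three
consecutive outputs `(x, y, z)` of xorshift128+ are, modulo `2^64`, within
`4 * (2^(64-n) - 1)` of the plane `z = (q + r * 2^a) * x + p * y`. -/
theorem xorshift128plus_near_plane (a b c n : ℕ)
    (ha1 : 1 ≤ a) (ha2 : a ≤ 63) (hb1 : 1 ≤ b) (hb2 : b ≤ 63)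
    (hc1 : 1 ≤ c) (hc2 : c ≤ 63) (hn1 : 1 ≤ n) (hn2 : n ≤ min b c)
    (s0 s1 s2 s3 : ℕ) (hs0 : s0 < 2 ^ 64) (hs1 : s1 < 2 ^ 64)
    (hs2 : s2 = xsStep a b c s0 s1) (hs3 : s3 = xsStep a b c s1 s2)
    (x y z : ℕ)
    (hx : x = (s0 + s1) % 2 ^ 64) (hy : y = (s1 + s2) % 2 ^ 64)
    (hz : z = (s2 + s3) % 2 ^ 64)
    (p q r : ℤ)
    (hpqr : (p = -1 ∧ q = 1 ∧ r = 1) ∨ (p = 1 ∧ q = -1 ∧ r = 1) ∨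
      (p = 1 ∧ q = 1 ∧ r = -1))
    (h1 : ((msbTrunc n s1 ^^^ msbTrunc n s0 ^^^ msbTrunc n (lshift64 a s0) : ℕ) : ℤ) ≡
      p * (msbTrunc n s1 : ℤ) + q * (msbTrunc n s0 : ℤ) +
        r * (msbTrunc n (lshift64 a s0) : ℤ) [ZMOD (2 ^ 64 : ℕ)])
    (h2 : ((msbTrunc n s2 ^^^ msbTrunc n s1 ^^^ msbTrunc n (lshift64 a s1) : ℕ) : ℤ) ≡
      p * (msbTrunc n s2 : ℤ) + q * (msbTrunc n s1 : ℤ) +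
        r * (msbTrunc n (lshift64 a s1) : ℤ) [ZMOD (2 ^ 64 : ℕ)]) :
    ∃ k : ℤ,
      |(z : ℤ) - (q + r * 2 ^ a) * (x : ℤ) - p * (y : ℤ) - k * 2 ^ 64| ≤
        4 * (2 ^ (64 - n) - 1) := by
  have hnb : n ≤ b := le_trans hn2 (min_le_left _ _)
  have hnc : n ≤ c := le_trans hn2 (min_le_right _ _)
  have hs2lt : s2 < 2 ^ 64 := hs2 ▸ xsStep_lt a b c s0 s1 hs0 hs1
  have hs3lt : s3 < 2 ^ 64 := hs3 ▸ xsStep_lt a b c s1 s2 hs1 hs2lt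
  have key1 : msbTrunc n s2 =
      msbTrunc n s1 ^^^ msbTrunc n s0 ^^^ msbTrunc n (lshift64 a s0) := by
    rw [hs2]; exact msb_xsStep a b c n s0 s1 hs0 hs1 hnb hnc
  have key2 : msbTrunc n s3 =
      msbTrunc n s2 ^^^ msbTrunc n s1 ^^^ msbTrunc n (lshift64 a s1) := by
    rw [hs3]; exact msb_xsStep a b c n s1 s2 hs1 hs2lt hnb hnc
  rw [← key1] at h1
  rw [← key2] at h2
  obtain ⟨k1, hk1⟩ := Int.modEq_iff_dvd.mp h1
  obtain ⟨k2, hk2⟩ := Int.modEq_iff_dvd.mp h2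
  push_cast at hk1 hk2
  -- error terms
  set E : ℤ := (2 : ℤ) ^ (64 - n) with hE
  set e0 : ℤ := ((s0 % 2 ^ (64 - n) : ℕ) : ℤ) with he0
  set e1 : ℤ := ((s1 % 2 ^ (64 - n) : ℕ) : ℤ) with he1
  set e2 : ℤ := ((s2 % 2 ^ (64 - n) : ℕ) : ℤ) with he2
  set e3 : ℤ := ((s3 % 2 ^ (64 - n) : ℕ) : ℤ) with he3
  set f0 : ℤ := ((lshift64 a s0 % 2 ^ (64 - n) : ℕ) : ℤ) with hf0
  set f1 : ℤ := ((lshift64 a s1 % 2 ^ (64 - n) : ℕ) : ℤ) with hf1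
  have em0 := msb_cast n s0
  have em1 := msb_cast n s1
  have em2 := msb_cast n s2
  have em3 := msb_cast n s3
  have eL0 := msb_cast n (lshift64 a s0)
  have eL1 := msb_cast n (lshift64 a s1)
  -- modular reduction witnesses
  set kz : ℤ := ((s2 : ℤ) + (s3 : ℤ)) / 2 ^ 64 with hkz
  set kx : ℤ := ((s0 : ℤ) + (s1 : ℤ)) / 2 ^ 64 with hkx
  set ky : ℤ := ((s1 : ℤ) + (s2 : ℤ)) / 2 ^ 64 with hky
  set kL0 : ℤ := (2 ^ a * (s0 : ℤ)) / 2 ^ 64 with hkL0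
  set kL1 : ℤ := (2 ^ a * (s1 : ℤ)) / 2 ^ 64 with hkL1
  have ez : (s2 : ℤ) + (s3 : ℤ) - (z : ℤ) = 2 ^ 64 * kz := by
    rw [hz, hkz]; push_cast; rw [Int.emod_def]; try ring
  have ex : (s0 : ℤ) + (s1 : ℤ) - (x : ℤ) = 2 ^ 64 * kx := by
    rw [hx, hkx]; push_cast; rw [Int.emod_def]; try ring
  have ey : (s1 : ℤ) + (s2 : ℤ) - (y : ℤ) = 2 ^ 64 * ky := by
    rw [hy, hky]; push_cast; rw [Int.emod_def]; try ring
  have el0 : ((lshift64 a s0 : ℕ) : ℤ) = 2 ^ a * (s0 : ℤ) - 2 ^ 64 * kL0 := by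
    rw [lshift64, hkL0]; push_cast; rw [Int.emod_def]; try ring
  have el1 : ((lshift64 a s1 : ℕ) : ℤ) = 2 ^ a * (s1 : ℤ) - 2 ^ 64 * kL1 := by
    rw [lshift64, hkL1]; push_cast; rw [Int.emod_def]; try ring
  refine ⟨(q + r * 2 ^ a) * kx + p * ky - kz - r * (kL0 + kL1) - k1 - k2, ?_⟩
  have herr : (z : ℤ) - (q + r * 2 ^ a) * (x : ℤ) - p * (y : ℤ) -
      ((q + r * 2 ^ a) * kx + p * ky - kz - r * (kL0 + kL1) - k1 - k2) * 2 ^ 64 =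
      e2 + e3 - p * (e1 + e2) - q * (e0 + e1) - r * (f0 + f1) := by
    linear_combination (-1 : ℤ) * ez + (q + r * 2 ^ a) * ex + p * ey + (-1) * hk1 +
      (-1) * hk2 + q * em0 + (p + q) * em1 + (p - 1) * em2 + (-1) * em3 +
      r * eL0 + r * eL1 + r * el0 + r * el1
  rw [herr]
  have hb0 : (0:ℤ) ≤ e0 := Int.natCast_nonneg _
  have hb1' : (0:ℤ) ≤ e1 := Int.natCast_nonneg _
  have hb2' : (0:ℤ) ≤ e2 := Int.natCast_nonneg _
  have hb3 : (0:ℤ) ≤ e3 := Int.natCast_nonneg _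
  have hbf0 : (0:ℤ) ≤ f0 := Int.natCast_nonneg _
  have hbf1 : (0:ℤ) ≤ f1 := Int.natCast_nonneg _
  have hpos : (0:ℕ) < 2 ^ (64 - n) := Nat.pow_pos (by norm_num)
  have hu0 : e0 < E := by rw [he0, hE]; exact_mod_cast Nat.mod_lt _ hpos
  have hu1 : e1 < E := by rw [he1, hE]; exact_mod_cast Nat.mod_lt _ hpos
  have hu2 : e2 < E := by rw [he2, hE]; exact_mod_cast Nat.mod_lt _ hpos
  have hu3 : e3 < E := by rw [he3, hE]; exact_mod_cast Nat.mod_lt _ hpos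
  have huf0 : f0 < E := by rw [hf0, hE]; exact_mod_cast Nat.mod_lt _ hpos
  have huf1 : f1 < E := by rw [hf1, hE]; exact_mod_cast Nat.mod_lt _ hpos
  rcases hpqr with ⟨hp, hq, hr⟩ | ⟨hp, hq, hr⟩ | ⟨hp, hq, hr⟩ <;>
    subst hp <;> subst hq <;> subst hr <;> rw [abs_le] <;> constructor <;> linarith
end
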